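/- arXiv:2105.07670 — 5 statements merged into one kernel-verified Lean document; each statement's English description precedes it below -/
import Mathlib

section
/- Let F ∈ L[X] be a polynomial of degree at most d ≥ 1, let A ≤ B be integers, D = B − A, M = max{|A|, |B|}, and let x_1, …, x_{d+1} be distinct integers in [A, B]. Then for every finite place v of L one has |F|_v ≤ |1/D!|_v · max{|F(x_1)|_v, …, |F(x_{d+1})|_v}, and for every infinite place v of L one has |F|_v ≤ (d+1)·(2M)^d · max{|F(x_1)|_v, …, |F(x_{d+1})|_v}. -/
open NumberField Polynomial IsDedekindDomain Nat
open scoped Classical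

/-- The integer-valued `𝔭`-adic valuation on a number field `L`, normalized so that a
uniformizer has valuation `1` (with the junk value `0` at `x = 0`). -/
noncomputable def intValOn {L : Type*} [Field L] [NumberField L]
    (v : HeightOneSpectrum (𝓞 L)) (x : L) : ℤ :=
  if h : x = 0 then 0
  else -Multiplicative.toAdd (WithZero.unzero ((v.valuation L).ne_zero_iff.mpr h))

/-- The normalized `𝔭`-adic absolute value `‖x‖_𝔭 = (N𝔭)^{-v_𝔭(x)}`, i.e. the `d_v`-th power
`|x|_v^{d_v}` of the absolute value `|·|_v` normalized by `|p|_v = 1/p`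
(where `d_v = [L_v : ℚ_p]` is the local degree); thus for every `x ∈ L`,
`log (finAbs v x) = d_v · log |x|_v`. -/
noncomputable def finAbs {L : Type*} [Field L] [NumberField L]
    (v : HeightOneSpectrum (𝓞 L)) (x : L) : ℝ :=
  if x = 0 then 0 else (Ideal.absNorm v.asIdeal : ℝ) ^ (-(intValOn v x))

/-- `|P|_v = max_i |a_i|_v` for `P = Σ_i a_i X^i` and `v` an absolute value on `L`. -/
noncomputable def polyNorm {L : Type*} [Field L] (v : L → ℝ) (P : L[X]) : ℝ :=
  ⨆ i, v (P.coeff i)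

/-- The absolute logarithmic Weil height `h(x) = Σ_v (d_v/d_L) log max{1, |x|_v}` of `x ∈ L`:
the finite-place part is written using `finAbs` (recall `log (finAbs v x) = d_v log |x|_v`),
and for an infinite place `v`, `d_v` is `InfinitePlace.mult v`. -/
noncomputable def elemHeight {L : Type*} [Field L] [NumberField L] (x : L) : ℝ :=
  (1 / (Module.finrank ℚ L : ℝ)) *
    ((∑ᶠ v : HeightOneSpectrum (𝓞 L), Real.log (max 1 (finAbs v x))) +
      ∑ v : InfinitePlace L, (v.mult : ℝ) * Real.log (max 1 (v x)))

/-- The height `h(P) = Σ_v (d_v/d_L) log max{1, |P|_v}` of a polynomial `P ∈ L[X]`. -/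
noncomputable def polyHeight {L : Type*} [Field L] [NumberField L] (P : L[X]) : ℝ :=
  (1 / (Module.finrank ℚ L : ℝ)) *
    ((∑ᶠ v : HeightOneSpectrum (𝓞 L), Real.log (max 1 (polyNorm (finAbs v) P))) +
      ∑ v : InfinitePlace L, (v.mult : ℝ) * Real.log (max 1 (polyNorm (⇑v) P)))

/-- The projective height `Σ_v (d_v/d_L) log max_c |c|_v` of the coefficient tuple of a pair of
polynomials `(P, Q)` (not both zero); for `P, Q` coprime with `F = P/Q` this is the height
`h(F)` of the rational fraction `F`, independent of the chosen representation. -/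
noncomputable def pairHeight {L : Type*} [Field L] [NumberField L] (P Q : L[X]) : ℝ :=
  (1 / (Module.finrank ℚ L : ℝ)) *
    ((∑ᶠ v : HeightOneSpectrum (𝓞 L),
        Real.log (max (polyNorm (finAbs v) P) (polyNorm (finAbs v) Q))) +
      ∑ v : InfinitePlace L, (v.mult : ℝ) *
        Real.log (max (polyNorm (⇑v) P) (polyNorm (⇑v) Q)))

/-- `h°(x) = (1/d_L) log |N_{L/ℚ}(x)|` for a nonzero algebraic integer `x`. -/
noncomputable def normHeight {L : Type*} [Field L] [NumberField L] (x : 𝓞 L) : ℝ :=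
  (1 / (Module.finrank ℚ L : ℝ)) * Real.log |(Algebra.norm ℤ x : ℝ)|

section Aux

open IsDedekindDomain.HeightOneSpectrum WithZeroMulInt NNReal

variable {L : Type*} [Field L] [NumberField L] (v : HeightOneSpectrum (𝓞 L))

lemma absNorm_ne_zero' : ((Ideal.absNorm v.asIdeal : ℕ) : ℝ≥0) ≠ 0 := by
  have h1 : Ideal.absNorm v.asIdeal ≠ 0 := by
    rw [Ne, Ideal.absNorm_eq_zero_iff]
    exact v.ne_bot
  exact_mod_cast h1

lemma one_lt_absNorm' : (1 : ℝ≥0) < ((Ideal.absNorm v.asIdeal : ℕ) : ℝ≥0) := by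
  have h1 : Ideal.absNorm v.asIdeal ≠ 0 := by
    rw [Ne, Ideal.absNorm_eq_zero_iff]
    exact v.ne_bot
  have h2 : Ideal.absNorm v.asIdeal ≠ 1 := by
    rw [Ne, Ideal.absNorm_eq_one_iff]
    exact v.isPrime.ne_top
  have : 1 < Ideal.absNorm v.asIdeal := by omega
  exact_mod_cast this

lemma finAbs_eq (x : L) :
    finAbs v x = ((toNNReal (absNorm_ne_zero' v) (v.valuation L x) : ℝ≥0) : ℝ) := by
  by_cases h : x = 0
  · simp [finAbs, h]
  · rw [finAbs, if_neg h, toNNReal_neg_apply _ ((v.valuation L).ne_zero_iff.mpr h),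
      intValOn, dif_neg h, neg_neg, NNReal.coe_zpow, NNReal.coe_natCast]

lemma finAbs_nonneg (x : L) : 0 ≤ finAbs v x := by
  rw [finAbs_eq]; exact NNReal.coe_nonneg _

lemma finAbs_le_mul {a b c : L} (h : v.valuation L a ≤ v.valuation L b * v.valuation L c) :
    finAbs v a ≤ finAbs v b * finAbs v c := by
  rw [finAbs_eq, finAbs_eq, finAbs_eq]
  have h2 := (toNNReal_strictMono (one_lt_absNorm' v)).monotone h
  rw [map_mul] at h2
  exact_mod_cast h2

lemma val_intCast_le_one (n : ℤ) : v.valuation L ((n : L)) ≤ 1 := by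
  have h := (valuation_le_one (K := L) v) ((n : 𝓞 L))
  exact_mod_cast h

end Aux

lemma prod_dvd_factorial_of_le {ι : Type*} [DecidableEq ι] {T : Finset ι} {g : ι → ℕ} {r : ℕ}
    (h1 : ∀ j ∈ T, 1 ≤ g j) (hr : ∀ j ∈ T, g j ≤ r) (hinj : Set.InjOn g T) :
    (∏ j ∈ T, g j) ∣ r ! := by
  have hsub : T.image g ⊆ Finset.Icc 1 r := by
    intro m hm
    simp only [Finset.mem_image] at hm
    obtain ⟨j, hj, rfl⟩ := hm
    exact Finset.mem_Icc.mpr ⟨h1 j hj, hr j hj⟩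
  calc (∏ j ∈ T, g j) = ∏ m ∈ T.image g, m := by
        rw [Finset.prod_image (fun a ha b hb h => hinj ha hb h)]
    _ ∣ ∏ m ∈ Finset.Icc 1 r, m := Finset.prod_dvd_prod_of_subset _ _ _ hsub
    _ = r ! := by rw [← Finset.Ico_add_one_right_eq_Icc, Finset.prod_Ico_id_eq_factorial]

lemma denom_dvd {n : ℕ} (x : Fin n → ℤ) (hinj : Function.Injective x) (A B : ℤ)
    (hx : ∀ i, x i ∈ Set.Icc A B) (D : ℕ) (hD : (D : ℤ) = B - A) (i : Fin n) :
    (∏ j ∈ Finset.univ.erase i, (x i - x j)) ∣ (D ! : ℤ) := by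
  classical
  rw [← Int.natAbs_dvd_natAbs]
  have habs : (∏ j ∈ Finset.univ.erase i, (x i - x j)).natAbs
      = ∏ j ∈ Finset.univ.erase i, (x i - x j).natAbs := map_prod Int.natAbsHom _ _
  rw [habs, Int.natAbs_natCast]
  set r : ℕ := (x i - A).toNat with hrdef
  set s : ℕ := (B - x i).toNat with hsdef
  have hxi := hx i
  rw [Set.mem_Icc] at hxi
  have hr : (r : ℤ) = x i - A := Int.toNat_of_nonneg (by omega)
  have hs : (s : ℤ) = B - x i := Int.toNat_of_nonneg (by omega)
  have hrs : r + s = D := by omega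
  have hne : ∀ j ∈ Finset.univ.erase i, x j ≠ x i := by
    intro j hj hxx
    exact (Finset.mem_erase.mp hj).1 (hinj hxx)
  rw [← Finset.prod_filter_mul_prod_filter_not (Finset.univ.erase i) (fun j => x j < x i)]
  have hd1 : (∏ j ∈ (Finset.univ.erase i).filter (fun j => x j < x i),
      (x i - x j).natAbs) ∣ r ! := by
    apply prod_dvd_factorial_of_le
    · intro j hj
      have h2 := (Finset.mem_filter.mp hj).2
      omega
    · intro j hj
      have h2 := (Finset.mem_filter.mp hj).2
      have h3 := hx j
      rw [Set.mem_Icc] at h3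
      omega
    · intro a ha b hb hab
      rw [Finset.mem_coe, Finset.mem_filter] at ha hb
      have hab' : (x i - x a).natAbs = (x i - x b).natAbs := hab
      have h2 := ha.2
      have h3 := hb.2
      have : x a = x b := by omega
      exact hinj this
  have hd2 : (∏ j ∈ (Finset.univ.erase i).filter (fun j => ¬ x j < x i),
      (x i - x j).natAbs) ∣ s ! := by
    apply prod_dvd_factorial_of_le
    · intro j hj
      rw [Finset.mem_filter] at hj
      have h2 := hne j hj.1
      have h3 := hj.2
      omega
    · intro j hj
      rw [Finset.mem_filter] at hj
      have h2 := hne j hj.1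
      have h3 := hj.2
      have h4 := hx j
      rw [Set.mem_Icc] at h4
      omega
    · intro a ha b hb hab
      rw [Finset.mem_coe, Finset.mem_filter] at ha hb
      have ha2 := hne a ha.1
      have hb2 := hne b hb.1
      have hab' : (x i - x a).natAbs = (x i - x b).natAbs := hab
      have h2 := ha.2
      have h3 := hb.2
      have : x a = x b := by omega
      exact hinj this
  calc _ ∣ r ! * s ! := mul_dvd_mul hd1 hd2
    _ ∣ (r + s)! := Nat.factorial_mul_factorial_dvd_factorial_add r s
    _ = D ! := by rw [hrs]

lemma coeff_prod_X_sub_C_le {L : Type*} [Field L] (w : AbsoluteValue L ℝ) {ι : Type*}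
    [DecidableEq ι] (T : Finset ι) (c : ι → L) :
    ∀ k, w ((∏ j ∈ T, (X - C (c j))).coeff k) ≤ ∏ j ∈ T, (1 + w (c j)) := by
  induction T using Finset.induction_on with
  | empty =>
    intro k
    simp only [Finset.prod_empty]
    rcases k with _ | k
    · simp
    · simp [coeff_one]
  | insert a T ha ih =>
    intro k
    rw [Finset.prod_insert ha, Finset.prod_insert ha, sub_mul]
    set P : L[X] := ∏ j ∈ T, (X - C (c j)) with hP
    set B : ℝ := ∏ j ∈ T, (1 + w (c j)) with hB
    have hB0 : 0 ≤ B := Finset.prod_nonneg fun j _ => by positivity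
    have hX : w ((X * P).coeff k) ≤ B := by
      cases k with
      | zero => simpa [Polynomial.mul_coeff_zero, coeff_X_zero] using hB0
      | succ m => rw [coeff_X_mul]; exact ih m
    calc w ((X * P - C (c a) * P).coeff k)
        = w ((X * P).coeff k - c a * P.coeff k) := by rw [coeff_sub, coeff_C_mul]
      _ ≤ w ((X * P).coeff k) + w (c a * P.coeff k) := w.sub_le_add _ _
      _ = w ((X * P).coeff k) + w (c a) * w (P.coeff k) := by rw [map_mul]
      _ ≤ B + w (c a) * B := add_le_add hX (mul_le_mul_of_nonneg_left (ih k) (w.nonneg _))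
      _ = (1 + w (c a)) * B := by ring

/-- Let `F ∈ L[X]` of degree at most `d ≥ 1` and let `x 0, …, x d` be distinct
integers in `[A, B]`, `D = B − A`, `M = max{|A|, |B|}`. Then for every finite place `v`,
`|F|_v ≤ |1/D!|_v · max_i |F(x_i)|_v` (stated, equivalently, after raising both sides of the
inequality to the local degree `d_v`, i.e. using the normalization `finAbs`), and for every
infinite place `v`, `|F|_v ≤ (d+1)·(2M)^d · max_i |F(x_i)|_v`. -/
theorem stmt_1 {L : Type*} [Field L] [NumberField L]
    (d : ℕ) (hd : 1 ≤ d) (F : L[X]) (hdeg : F.natDegree ≤ d)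
    (A B : ℤ) (hAB : A ≤ B) (D : ℕ) (hD : (D : ℤ) = B - A) (M : ℤ) (hM : M = max |A| |B|)
    (x : Fin (d + 1) → ℤ) (hinj : Function.Injective x) (hx : ∀ i, x i ∈ Set.Icc A B) :
    (∀ v : HeightOneSpectrum (𝓞 L),
      polyNorm (finAbs v) F ≤
        finAbs v ((D ! : L)⁻¹) * ⨆ i, finAbs v (F.eval ((x i : ℤ) : L))) ∧
    (∀ v : InfinitePlace L,
      polyNorm (⇑v) F ≤
        ((d : ℝ) + 1) * (2 * (M : ℝ)) ^ d * ⨆ i, v (F.eval ((x i : ℤ) : L))) := by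
  classical
  set ξ : Fin (d + 1) → L := fun i => ((x i : ℤ) : L) with hξ
  have hinjL : Set.InjOn ξ ((Finset.univ : Finset (Fin (d + 1))) : Set (Fin (d + 1))) := by
    intro i _ j _ h
    have h' : ((x i : ℤ) : L) = ((x j : ℤ) : L) := h
    exact hinj (by exact_mod_cast h')
  have hdeg' : F.degree < ((Finset.univ : Finset (Fin (d + 1))).card : ℕ) := by
    refine lt_of_le_of_lt degree_le_natDegree ?_
    rw [Finset.card_univ, Fintype.card_fin]
    exact_mod_cast Nat.lt_succ_of_le hdeg
  have hF := Lagrange.eq_interpolate (v := ξ) hinjL hdeg'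
  set den : Fin (d + 1) → ℤ := fun i => ∏ j ∈ Finset.univ.erase i, (x i - x j) with hdend
  set Npoly : Fin (d + 1) → L[X] :=
    fun i => ∏ j ∈ Finset.univ.erase i, (X - C (ξ j)) with hNp
  have hdenne : ∀ i, den i ≠ 0 := by
    intro i
    rw [hdend]
    refine Finset.prod_ne_zero_iff.mpr fun j hj => sub_ne_zero.mpr fun h => ?_
    exact (Finset.mem_erase.mp hj).1 (hinj h).symm
  have hbasis : ∀ i, Lagrange.basis Finset.univ ξ i = C (((den i : ℤ) : L))⁻¹ * Npoly i := by
    intro i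
    have hcast : ((den i : ℤ) : L) = ∏ j ∈ Finset.univ.erase i, (ξ i - ξ j) := by
      rw [hdend]
      push_cast
      rfl
    unfold Lagrange.basis Lagrange.basisDivisor
    rw [Finset.prod_mul_distrib]
    congr 1
    rw [← map_prod (C : L →+* L[X]) (fun j => (ξ i - ξ j)⁻¹) (Finset.univ.erase i),
      Finset.prod_inv_distrib, ← hcast]
  have hcoeff : ∀ k, F.coeff k =
      ∑ i, F.eval (ξ i) * (((den i : ℤ) : L)⁻¹ * (Npoly i).coeff k) := by
    intro k
    conv_lhs => rw [hF]
    rw [Lagrange.interpolate_apply, finset_sum_coeff]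
    refine Finset.sum_congr rfl fun i _ => ?_
    rw [hbasis i]
    simp only [coeff_C_mul]
  have hNint : ∀ i k, ∃ m : ℤ, (Npoly i).coeff k = (m : L) := by
    intro i k
    refine ⟨(∏ j ∈ Finset.univ.erase i, (X - C (x j))).coeff k, ?_⟩
    have hmap : Npoly i = (∏ j ∈ Finset.univ.erase i, (X - C (x j))).map (Int.castRingHom L) := by
      rw [hNp]
      simp [Polynomial.map_prod, hξ]
    rw [hmap, coeff_map]
    simp
  constructor
  · intro v
    obtain ⟨i₀, -, hi₀⟩ := Finset.exists_max_image Finset.univ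
      (fun i => v.valuation L (F.eval (ξ i))) ⟨0, Finset.mem_univ 0⟩
    have hvalNc : ∀ i k, v.valuation L ((Npoly i).coeff k) ≤ 1 := by
      intro i k
      obtain ⟨m, hm⟩ := hNint i k
      rw [hm]
      exact val_intCast_le_one v m
    have hvalden : ∀ i, v.valuation L (((den i : ℤ) : L)⁻¹) ≤ v.valuation L ((D ! : L)⁻¹) := by
      intro i
      obtain ⟨c, hc⟩ := denom_dvd x hinj A B hx D hD i
      rw [map_inv₀, map_inv₀]
      apply inv_anti₀
      · rw [zero_lt_iff]
        exact (Valuation.ne_zero_iff _).mpr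
          (Nat.cast_ne_zero.mpr (Nat.factorial_ne_zero D))
      · calc v.valuation L ((D ! : L))
            = v.valuation L (((den i : ℤ) : L)) * v.valuation L ((c : L)) := by
              rw [← map_mul]
              congr 1
              have hc' : (D ! : ℤ) = den i * c := hc
              exact_mod_cast congrArg (fun z : ℤ => (z : L)) hc'
          _ ≤ v.valuation L (((den i : ℤ) : L)) * 1 :=
              mul_le_mul_right (val_intCast_le_one v c) _
          _ = _ := mul_one _
    have key : ∀ k, v.valuation L (F.coeff k) ≤
        v.valuation L ((D ! : L)⁻¹) * v.valuation L (F.eval (ξ i₀)) := by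
      intro k
      rw [hcoeff k]
      apply Valuation.map_sum_le
      intro i _
      rw [map_mul, map_mul]
      refine le_trans (mul_le_mul' (hi₀ i (Finset.mem_univ i))
        (mul_le_mul' (hvalden i) (hvalNc i k))) ?_
      rw [mul_one, mul_comm]
    show (⨆ k, finAbs v (F.coeff k)) ≤ finAbs v ((D ! : L)⁻¹) * ⨆ i, finAbs v (F.eval (ξ i))
    refine ciSup_le fun k => ?_
    refine (finAbs_le_mul v (key k)).trans ?_
    refine mul_le_mul_of_nonneg_left ?_ (finAbs_nonneg v _)
    exact le_ciSup (f := fun i => finAbs v (F.eval (ξ i)))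
      (Set.Finite.bddAbove (Set.finite_range _)) i₀
  · intro w
    have hABlt : A < B := by
      rcases lt_or_ge A B with h | h
      · exact h
      exfalso
      have e0 : x ⟨0, by omega⟩ = x ⟨1, by omega⟩ := by
        have h0 := hx ⟨0, by omega⟩
        have h1 := hx ⟨1, by omega⟩
        rw [Set.mem_Icc] at h0 h1
        omega
      have h2 := congrArg Fin.val (hinj e0)
      simp at h2
    have hM1 : (1 : ℤ) ≤ M := by
      rw [hM]
      rcases le_or_gt 1 B with h | h
      · exact le_trans (le_trans h (le_abs_self B)) (le_max_right _ _)
      · have h2 : 1 ≤ |A| := by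
          rw [abs_of_neg (by omega)]
          omega
        exact le_trans h2 (le_max_left _ _)
    have hM1R : (1 : ℝ) ≤ (M : ℝ) := by exact_mod_cast hM1
    have hwint : ∀ n : ℤ, w ((n : L)) = |(n : ℝ)| := by
      intro n
      rw [← InfinitePlace.mk_embedding w, InfinitePlace.apply, map_intCast, Complex.norm_intCast]
    have hwx : ∀ j, w (ξ j) ≤ (M : ℝ) := by
      intro j
      have hj := hx j
      rw [Set.mem_Icc] at hj
      have h2 : |x j| ≤ M := by
        rw [hM]
        exact abs_le_max_abs_abs hj.1 hj.2
      calc w (ξ j) = |((x j : ℤ) : ℝ)| := hwint (x j)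
        _ ≤ (M : ℝ) := by
          rw [← Int.cast_abs]
          exact_mod_cast h2
    have hprodbound : ∀ i k, w ((Npoly i).coeff k) ≤ (2 * (M : ℝ)) ^ d := by
      intro i k
      refine le_trans (coeff_prod_X_sub_C_le w.1 (Finset.univ.erase i) ξ k) ?_
      calc (∏ j ∈ Finset.univ.erase i, (1 + w (ξ j)))
          ≤ ∏ _j ∈ Finset.univ.erase i, (2 * (M : ℝ)) := by
            refine Finset.prod_le_prod (fun j _ => by positivity) fun j _ => ?_
            have := hwx j
            linarith
        _ = (2 * (M : ℝ)) ^ d := by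
            rw [Finset.prod_const, Finset.card_erase_of_mem (Finset.mem_univ i),
              Finset.card_univ, Fintype.card_fin]
            norm_num
    have hbdd : BddAbove (Set.range fun i => w (F.eval (ξ i))) :=
      Set.Finite.bddAbove (Set.finite_range _)
    have hSle : ∀ i, w (F.eval (ξ i)) ≤ ⨆ i, w (F.eval (ξ i)) := fun i => le_ciSup hbdd i
    have hS0 : 0 ≤ ⨆ i, w (F.eval (ξ i)) := le_trans (apply_nonneg w _) (hSle 0)
    show (⨆ k, w (F.coeff k)) ≤ ((d : ℝ) + 1) * (2 * (M : ℝ)) ^ d * ⨆ i, w (F.eval (ξ i))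
    refine ciSup_le fun k => ?_
    rw [hcoeff k]
    calc w (∑ i, F.eval (ξ i) * (((den i : ℤ) : L)⁻¹ * (Npoly i).coeff k))
        ≤ ∑ i, w (F.eval (ξ i) * (((den i : ℤ) : L)⁻¹ * (Npoly i).coeff k)) :=
          w.1.sum_le _ _
      _ ≤ ∑ _i : Fin (d + 1), (⨆ i, w (F.eval (ξ i))) * (2 * (M : ℝ)) ^ d := by
          refine Finset.sum_le_sum fun i _ => ?_
          rw [map_mul, map_mul, map_inv₀]
          have hd1 : (w (((den i : ℤ) : L)))⁻¹ ≤ 1 := by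
            rw [hwint]
            have h2 : (1 : ℝ) ≤ |((den i : ℤ) : ℝ)| := by
              rw [← Int.cast_abs]
              exact_mod_cast Int.one_le_abs (hdenne i)
            exact inv_le_one_of_one_le₀ h2
          have hmul : (w (((den i : ℤ) : L)))⁻¹ * w ((Npoly i).coeff k)
              ≤ (2 * (M : ℝ)) ^ d := by
            calc (w (((den i : ℤ) : L)))⁻¹ * w ((Npoly i).coeff k)
                ≤ 1 * ((2 * (M : ℝ)) ^ d) :=
                  mul_le_mul hd1 (hprodbound i k) (apply_nonneg w _) zero_le_one
              _ = (2 * (M : ℝ)) ^ d := one_mul _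
          refine mul_le_mul (hSle i) hmul ?_ hS0
          exact mul_nonneg (inv_nonneg.mpr (apply_nonneg w _)) (apply_nonneg w _)
      _ = ((d : ℝ) + 1) * (2 * (M : ℝ)) ^ d * ⨆ i, w (F.eval (ξ i)) := by
          rw [Finset.sum_const, Finset.card_univ, Fintype.card_fin]
          ring
end

section
/- Let F ∈ L[X] be a polynomial of degree at most d ≥ 1, let A ≤ B be integers with D = B − A and M = max{|A|, |B|}, let N ≥ d+1, and let x_1, …, x_N be distinct integers in [A, B]. Then for every infinite place v of L one has log max{1, |F|_v} ≤ d·log(2M) + log(d+1) + (1/(N−d)) · Σ_{i=1}^N log max{1, |F(x_i)|_v}. -/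
open NumberField Polynomial IsDedekindDomain Nat
open scoped Classical

/-- Coefficient bound for products of `C u * (X - C b)`. -/
theorem coeff_prod_bound {L : Type*} [Field L] (w : AbsoluteValue L ℝ)
    {ι : Type*} (t : Finset ι) (u b : ι → L) :
    ∀ i, w ((∏ k ∈ t, (C (u k) * (X - C (b k)))).coeff i) ≤
      ∏ k ∈ t, (w (u k) * (1 + w (b k))) := by
  classical
  induction t using Finset.induction_on with
  | empty =>
    intro i
    simp only [Finset.prod_empty]
    cases i with
    | zero => simp
    | succ n => simp [coeff_one, Nat.succ_ne_zero]
  | insert _ _ ha ih =>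
    rename_i c s
    intro i
    rw [Finset.prod_insert ha, Finset.prod_insert ha, mul_assoc, coeff_C_mul, map_mul]
    set P := ∏ k ∈ s, (C (u k) * (X - C (b k))) with hP
    have hbound : w (((X - C (b c)) * P).coeff i) ≤
        (1 + w (b c)) * ∏ k ∈ s, (w (u k) * (1 + w (b k))) := by
      rw [sub_mul, coeff_sub]
      refine le_trans (w.sub_le_add _ _) ?_
      rw [coeff_C_mul, map_mul]
      have h2 : w (b c) * w (P.coeff i) ≤ w (b c) * ∏ k ∈ s, (w (u k) * (1 + w (b k))) :=
        mul_le_mul_of_nonneg_left (ih i) (w.nonneg _)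
      have h1 : w ((X * P).coeff i) ≤ ∏ k ∈ s, (w (u k) * (1 + w (b k))) := by
        cases i with
        | zero =>
            simp only [mul_coeff_zero, coeff_X_zero, zero_mul, map_zero]
            exact Finset.prod_nonneg fun k _ => mul_nonneg (w.nonneg _)
              (by positivity)
        | succ n => rw [coeff_X_mul]; exact ih n
      calc w ((X * P).coeff i) + w (b c) * w (P.coeff i)
          ≤ (∏ k ∈ s, (w (u k) * (1 + w (b k)))) +
            w (b c) * ∏ k ∈ s, (w (u k) * (1 + w (b k))) := add_le_add h1 h2
        _ = (1 + w (b c)) * ∏ k ∈ s, (w (u k) * (1 + w (b k))) := by ring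
    calc w (u c) * w (((X - C (b c)) * P).coeff i)
        ≤ w (u c) * ((1 + w (b c)) * ∏ k ∈ s, (w (u k) * (1 + w (b k)))) :=
          mul_le_mul_of_nonneg_left hbound (w.nonneg _)
      _ = w (u c) * (1 + w (b c)) * ∏ k ∈ s, (w (u k) * (1 + w (b k))) := by ring

/-- Let `F ∈ L[X]` of degree at most `d ≥ 1`, `N ≥ d+1`, and let
`x 0, …, x (N-1)` be distinct integers in `[A, B]`, `D = B − A`, `M = max{|A|, |B|}`. Then for
every infinite place `v` of `L`,
`log max{1, |F|_v} ≤ d·log(2M) + log(d+1) + (1/(N−d)) Σ_i log max{1, |F(x_i)|_v}`. -/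
theorem stmt_5 {L : Type*} [Field L] [NumberField L]
    (d : ℕ) (hd : 1 ≤ d) (F : L[X]) (hdeg : F.natDegree ≤ d)
    (A B : ℤ) (hAB : A ≤ B) (D : ℕ) (hD : (D : ℤ) = B - A) (M : ℤ) (hM : M = max |A| |B|)
    (N : ℕ) (hN : d + 1 ≤ N)
    (x : Fin N → ℤ) (hinj : Function.Injective x) (hx : ∀ i, x i ∈ Set.Icc A B)
    (v : InfinitePlace L) :
    Real.log (max 1 (polyNorm (⇑v) F)) ≤
      (d : ℝ) * Real.log (2 * (M : ℝ)) + Real.log ((d : ℝ) + 1)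
      + (1 / ((N : ℝ) - (d : ℝ))) *
          ∑ i, Real.log (max 1 (v (F.eval ((x i : ℤ) : L)))) := by
  have hchar : (0:ℝ) < (N : ℝ) - d := by
    have : (d:ℝ) + 1 ≤ N := by exact_mod_cast hN
    linarith
  set xL : Fin N → L := fun i => ((x i : ℤ) : L) with hxL
  have vint : ∀ n : ℤ, v ((n : L)) = |(n : ℝ)| := by
    intro n
    conv_lhs => rw [← v.mk_embedding]
    rw [NumberField.InfinitePlace.apply, map_intCast]
    exact Complex.norm_intCast n
  have hM1 : (1:ℤ) ≤ M := by
    by_contra h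
    push_neg at h
    have hAM : |A| ≤ M := hM ▸ le_max_left _ _
    have hBM : |B| ≤ M := hM ▸ le_max_right _ _
    have hA0 : A = 0 := abs_eq_zero.mp
      (le_antisymm (by linarith) (abs_nonneg A))
    have hB0 : B = 0 := abs_eq_zero.mp
      (le_antisymm (by linarith) (abs_nonneg B))
    have hxz : ∀ i, x i = 0 := fun i =>
      le_antisymm (hB0 ▸ (hx i).2) (hA0 ▸ (hx i).1)
    have h01 : (⟨0, by omega⟩ : Fin N) = ⟨1, by omega⟩ :=
      hinj (by rw [hxz, hxz])
    simp at h01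
  have hMR : (1:ℝ) ≤ (M:ℝ) := by exact_mod_cast hM1
  have hxM : ∀ i, |x i| ≤ M := by
    intro i
    rcases hx i with ⟨h1, h2⟩
    rw [hM]
    exact abs_le.mpr ⟨le_trans (le_trans (neg_le_neg (le_max_left |A| |B|))
      (neg_abs_le A)) h1, h2.trans ((le_abs_self B).trans (le_max_right _ _))⟩
  -- values, threshold, and index selection
  set a : Fin N → ℝ := fun i => Real.log (max 1 (v (F.eval (xL i)))) with haDef
  have ha0 : ∀ i, 0 ≤ a i := fun i => Real.log_nonneg (le_max_left _ _)
  set t : ℝ := (1 / ((N : ℝ) - d)) * ∑ i, a i with htDef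
  have ht0 : 0 ≤ t := mul_nonneg (by positivity)
    (Finset.sum_nonneg fun i _ => ha0 i)
  have htsum : ((N:ℝ) - d) * t = ∑ i, a i := by
    rw [htDef]; field_simp
  have hGcard : d + 1 ≤ (Finset.univ.filter (fun i => a i ≤ t)).card := by
    by_contra hcon
    push_neg at hcon
    set G := Finset.univ.filter (fun i => a i ≤ t) with hG
    set Gc := Finset.univ.filter (fun i => ¬ a i ≤ t) with hGc
    have hcards : G.card + Gc.card = N := by
      rw [hG, hGc, Finset.card_filter_add_card_filter_not]
      simp
    have hGcNe : Gc.Nonempty := by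
      rw [← Finset.card_pos]; omega
    have hlt : (Gc.card : ℝ) * t < ∑ i ∈ Gc, a i := by
      have h := Finset.sum_lt_sum_of_nonempty hGcNe (f := fun _ => t) (g := a)
        (fun i hi => by
          rw [hGc, Finset.mem_filter] at hi
          exact lt_of_not_ge hi.2)
      simpa [mul_comm] using h
    have hle : ∑ i ∈ Gc, a i ≤ ∑ i, a i :=
      Finset.sum_le_sum_of_subset_of_nonneg (Finset.subset_univ _)
        (fun i _ _ => ha0 i)
    have hcast : (G.card : ℝ) + Gc.card = N := by exact_mod_cast hcards
    have hGd : (G.card : ℝ) ≤ d := by exact_mod_cast Nat.lt_succ_iff.mp hcon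
    have hcard2 : ((N:ℝ) - d) ≤ (Gc.card : ℝ) := by linarith
    have := mul_le_mul_of_nonneg_right hcard2 ht0
    linarith
  obtain ⟨S, hSsub, hScard⟩ := Finset.exists_subset_card_eq hGcard
  have hSle : ∀ j ∈ S, a j ≤ t := fun j hj =>
    (Finset.mem_filter.mp (hSsub hj)).2
  -- Lagrange interpolation
  have hxLinj : Function.Injective xL := by
    intro i j h
    apply hinj
    have h' : ((x i : ℤ) : L) = ((x j : ℤ) : L) := h
    exact_mod_cast h'
  have hdegS : F.degree < (S.card : WithBot ℕ) := by
    rw [hScard]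
    calc F.degree ≤ (F.natDegree : WithBot ℕ) := Polynomial.degree_le_natDegree
      _ ≤ (d : WithBot ℕ) := by exact_mod_cast hdeg
      _ < ((d+1 : ℕ) : WithBot ℕ) := by exact_mod_cast Nat.lt_succ_self d
  have hFeq := Lagrange.eq_interpolate (v := xL) (s := S) hxLinj.injOn hdegS
  -- coefficient bound for the basis polynomials
  have hbasis : ∀ j ∈ S, ∀ i,
      v.1 ((Lagrange.basis S xL j).coeff i) ≤ (2*(M:ℝ))^d := by
    intro j hj i
    have hb := coeff_prod_bound v.1 (S.erase j)
      (fun k => (xL j - xL k)⁻¹) (fun k => xL k) i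
    have hbeq : Lagrange.basis S xL j =
        ∏ k ∈ S.erase j, (C ((xL j - xL k)⁻¹) * (X - C (xL k))) := rfl
    rw [← hbeq] at hb
    refine le_trans hb ?_
    have hcard : (S.erase j).card = d := by
      rw [Finset.card_erase_of_mem hj, hScard]
      omega
    calc ∏ k ∈ S.erase j, (v.1 ((xL j - xL k)⁻¹) * (1 + v.1 (xL k)))
        ≤ ∏ k ∈ S.erase j, (2*(M:ℝ)) := by
          refine Finset.prod_le_prod (fun k _ => mul_nonneg (v.1.nonneg _)
            (by positivity)) (fun k hk => ?_)
          have hne : x j ≠ x k := fun hc =>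
            (Finset.ne_of_mem_erase hk) (hinj hc).symm
          have h1 : v.1 ((xL j - xL k)⁻¹) ≤ 1 := by
            rw [map_inv₀]
            have hsub : xL j - xL k = (((x j - x k : ℤ)) : L) := by
              simp [hxL]
            have hv1 : (1:ℝ) ≤ v.1 (xL j - xL k) := by
              rw [hsub]
              have : v (((x j - x k : ℤ)) : L) = |((x j - x k : ℤ) : ℝ)| :=
                vint _
              rw [show v.1 (((x j - x k : ℤ)) : L) = v (((x j - x k : ℤ)) : L)
                from rfl, this]
              have h1 : (1:ℤ) ≤ |x j - x k| := Int.one_le_abs (sub_ne_zero.mpr hne)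
              exact_mod_cast h1
            exact inv_le_one_of_one_le₀ hv1
          have h2 : 1 + v.1 (xL k) ≤ 2*(M:ℝ) := by
            have : v (xL k) = |((x k : ℤ) : ℝ)| := vint _
            rw [show v.1 (xL k) = v (xL k) from rfl, this]
            have hxk : |((x k : ℤ) : ℝ)| ≤ (M:ℝ) := by
              exact_mod_cast hxM k
            linarith
          calc v.1 ((xL j - xL k)⁻¹) * (1 + v.1 (xL k))
              ≤ 1 * (2*(M:ℝ)) := mul_le_mul h1 h2
                (by positivity) zero_le_one
            _ = 2*(M:ℝ) := one_mul _
      _ = (2*(M:ℝ))^d := by rw [Finset.prod_const, hcard]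
  -- coefficient bound for F
  have hcoeff : ∀ i, v (F.coeff i) ≤
      ((d:ℝ)+1) * ((2*(M:ℝ))^d * Real.exp t) := by
    intro i
    conv_lhs => rw [hFeq]
    rw [Lagrange.interpolate_apply, Polynomial.finset_sum_coeff]
    refine le_trans (v.1.sum_le _ _) ?_
    have hterm : ∀ j ∈ S,
        v.1 ((C (F.eval (xL j)) * Lagrange.basis S xL j).coeff i) ≤
          (2*(M:ℝ))^d * Real.exp t := by
      intro j hj
      rw [coeff_C_mul, map_mul]
      have hvj : v.1 (F.eval (xL j)) ≤ Real.exp t := by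
        have hpos : (0:ℝ) < max 1 (v (F.eval (xL j))) :=
          lt_of_lt_of_le one_pos (le_max_left _ _)
        calc v.1 (F.eval (xL j)) ≤ max 1 (v (F.eval (xL j))) :=
              le_max_right _ _
          _ = Real.exp (a j) := (Real.exp_log hpos).symm
          _ ≤ Real.exp t := Real.exp_le_exp.mpr (hSle j hj)
      calc v.1 (F.eval (xL j)) * v.1 ((Lagrange.basis S xL j).coeff i)
          ≤ Real.exp t * (2*(M:ℝ))^d := mul_le_mul hvj (hbasis j hj i)
            (v.1.nonneg _) (Real.exp_nonneg t)
        _ = (2*(M:ℝ))^d * Real.exp t := mul_comm _ _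
    refine le_trans (Finset.sum_le_sum hterm) ?_
    refine le_of_eq ?_
    rw [Finset.sum_const, hScard, nsmul_eq_mul]
    push_cast
    ring
  -- assemble
  have h2M : (0:ℝ) < 2*(M:ℝ) := by linarith
  have hpowpos : (0:ℝ) < (2*(M:ℝ))^d := pow_pos h2M d
  have hCpos : (0:ℝ) < ((d:ℝ)+1) * ((2*(M:ℝ))^d * Real.exp t) :=
    mul_pos (by positivity) (mul_pos hpowpos (Real.exp_pos t))
  have hC1 : (1:ℝ) ≤ ((d:ℝ)+1) * ((2*(M:ℝ))^d * Real.exp t) := by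
    have h1b : (1:ℝ) ≤ (2*(M:ℝ))^d := one_le_pow₀ (by linarith)
    have h1c : (1:ℝ) ≤ Real.exp t := Real.one_le_exp ht0
    have h1a : (1:ℝ) ≤ (d:ℝ)+1 := by
      have := Nat.cast_nonneg (α := ℝ) d
      linarith
    calc (1:ℝ) ≤ (2*(M:ℝ))^d * Real.exp t := by nlinarith
      _ ≤ ((d:ℝ)+1) * ((2*(M:ℝ))^d * Real.exp t) :=
        le_mul_of_one_le_left (mul_pos hpowpos (Real.exp_pos t)).le h1a
  have hpoly : polyNorm (⇑v) F ≤ ((d:ℝ)+1) * ((2*(M:ℝ))^d * Real.exp t) :=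
    Real.iSup_le (fun i => hcoeff i) hCpos.le
  have hmax : max 1 (polyNorm (⇑v) F) ≤ ((d:ℝ)+1) * ((2*(M:ℝ))^d * Real.exp t) :=
    max_le hC1 hpoly
  have hlog : Real.log (max 1 (polyNorm (⇑v) F)) ≤
      Real.log (((d:ℝ)+1) * ((2*(M:ℝ))^d * Real.exp t)) :=
    Real.log_le_log (lt_of_lt_of_le one_pos (le_max_left _ _)) hmax
  have hlogC : Real.log (((d:ℝ)+1) * ((2*(M:ℝ))^d * Real.exp t)) =
      Real.log ((d:ℝ)+1) + ((d:ℝ) * Real.log (2*(M:ℝ)) + t) := by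
    rw [Real.log_mul (by positivity) (ne_of_gt (mul_pos hpowpos (Real.exp_pos t))),
      Real.log_mul (ne_of_gt hpowpos) (Real.exp_ne_zero t),
      Real.log_pow, Real.log_exp]
  rw [hlogC] at hlog
  have hfin : (1 / ((N : ℝ) - (d : ℝ))) *
      ∑ i, Real.log (max 1 (v (F.eval ((x i : ℤ) : L)))) = t := by
    rw [htDef]
  linarith [hlog]
end

section
/- Let F ∈ L[X] be a polynomial of degree at most d ≥ 1, let A ≤ B be integers with D = B − A, and let v be a finite place of L. Then the number of integers x ∈ [A, B] satisfying |F(x)|_v < |D!|_v · |F|_v is at most d. -/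
open NumberField Polynomial IsDedekindDomain Nat
open scoped Classical

namespace StmtSix
open WithZeroMulInt
variable {L : Type*} [Field L] [NumberField L] (v : HeightOneSpectrum (𝓞 L))

lemma one_lt_base : 1 < (Ideal.absNorm v.asIdeal : NNReal) := by
  have h0 : Ideal.absNorm v.asIdeal ≠ 0 := by
    rw [ne_eq, Ideal.absNorm_eq_zero_iff]; exact v.ne_bot
  have h1 : Ideal.absNorm v.asIdeal ≠ 1 := by
    rw [ne_eq, Ideal.absNorm_eq_one_iff]; exact v.isPrime.ne_top
  have : 1 < Ideal.absNorm v.asIdeal := by omega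
  exact_mod_cast this

lemma base_ne_zero : (Ideal.absNorm v.asIdeal : NNReal) ≠ 0 :=
  ne_zero_of_lt (one_lt_base v)

lemma finAbs_eq (x : L) :
    finAbs v x = ((toNNReal (base_ne_zero v) (v.valuation L x) : NNReal) : ℝ) := by
  by_cases h : x = 0
  · subst h
    simp [finAbs, toNNReal_pos_apply (base_ne_zero v) (map_zero (v.valuation L))]
  · have hv : v.valuation L x ≠ 0 := (Valuation.ne_zero_iff _).mpr h
    rw [finAbs, if_neg h, toNNReal_neg_apply _ hv, intValOn, dif_neg h, neg_neg]
    push_cast [NNReal.coe_zpow]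
    rfl

lemma finAbs_nonneg (x : L) : 0 ≤ finAbs v x := by
  rw [finAbs_eq]; exact NNReal.coe_nonneg _

lemma finAbs_zero : finAbs v (0 : L) = 0 := by simp [finAbs]

lemma finAbs_mul (x y : L) : finAbs v (x * y) = finAbs v x * finAbs v y := by
  simp only [finAbs_eq, map_mul, NNReal.coe_mul]

lemma finAbs_pos {x : L} (h : x ≠ 0) : 0 < finAbs v x := by
  rw [finAbs_eq]
  exact_mod_cast toNNReal_pos (base_ne_zero v) ((Valuation.ne_zero_iff _).mpr h)

lemma finAbs_add_le (x y : L) : finAbs v (x + y) ≤ max (finAbs v x) (finAbs v y) := by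
  simp only [finAbs_eq]
  have hm := (toNNReal_strictMono (one_lt_base v)).monotone
  have h := hm (Valuation.map_add (v.valuation L) x y)
  rw [hm.map_max] at h
  exact_mod_cast h

lemma finAbs_intCast_le_one (n : ℤ) : finAbs v ((n : ℤ) : L) ≤ 1 := by
  rw [finAbs_eq, ← map_intCast (algebraMap (𝓞 L) L) n]
  have h1 : v.valuation L (algebraMap (𝓞 L) L ((n : ℤ) : 𝓞 L)) ≤ 1 := v.valuation_le_one _
  exact_mod_cast (toNNReal_le_one_iff (one_lt_base v)).mpr h1

lemma finAbs_inv (x : L) : finAbs v x⁻¹ = (finAbs v x)⁻¹ := by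
  simp only [finAbs_eq, map_inv₀, NNReal.coe_inv]

lemma finAbs_dvd {m n : ℤ} (h : m ∣ n) : finAbs v ((n : ℤ) : L) ≤ finAbs v ((m : ℤ) : L) := by
  obtain ⟨k, rfl⟩ := h
  push_cast
  rw [finAbs_mul]
  have hk := finAbs_intCast_le_one v k
  have hm := finAbs_nonneg v ((m : ℤ) : L)
  have hk0 := finAbs_nonneg v ((k : ℤ) : L)
  nlinarith

lemma polyNorm_bddAbove (P : L[X]) :
    BddAbove (Set.range fun i => finAbs v (P.coeff i)) := by
  apply Set.Finite.bddAbove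
  apply Set.Finite.subset
    (Set.Finite.insert 0 (P.support.image fun i => finAbs v (P.coeff i)).finite_toSet)
  rintro r ⟨i, rfl⟩
  by_cases h : P.coeff i = 0
  · exact Set.mem_insert_iff.mpr (Or.inl (by simp [h, finAbs_zero]))
  · exact Set.mem_insert_iff.mpr
      (Or.inr (Finset.mem_coe.mpr (Finset.mem_image_of_mem _ (mem_support_iff.mpr h))))

lemma coeff_le_polyNorm (P : L[X]) (i : ℕ) :
    finAbs v (P.coeff i) ≤ polyNorm (finAbs v) P :=
  le_ciSup (polyNorm_bddAbove v P) i

lemma polyNorm_nonneg (P : L[X]) : 0 ≤ polyNorm (finAbs v) P :=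
  le_trans (finAbs_nonneg v _) (coeff_le_polyNorm v P 0)

lemma polyNorm_le (P : L[X]) {c : ℝ} (h : ∀ i, finAbs v (P.coeff i) ≤ c) :
    polyNorm (finAbs v) P ≤ c :=
  ciSup_le h

lemma polyNorm_zero : polyNorm (finAbs v) (0 : L[X]) = 0 := by
  simp [polyNorm, finAbs_zero]

lemma polyNorm_add_le (P Q : L[X]) :
    polyNorm (finAbs v) (P + Q) ≤ max (polyNorm (finAbs v) P) (polyNorm (finAbs v) Q) :=
  polyNorm_le v _ fun i => by
    rw [coeff_add]
    exact (finAbs_add_le v _ _).trans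
      (max_le_max (coeff_le_polyNorm v P i) (coeff_le_polyNorm v Q i))

lemma polyNorm_C_mul_le (c : L) (P : L[X]) :
    polyNorm (finAbs v) (C c * P) ≤ finAbs v c * polyNorm (finAbs v) P :=
  polyNorm_le v _ fun i => by
    rw [coeff_C_mul, finAbs_mul]
    exact mul_le_mul_of_nonneg_left (coeff_le_polyNorm v P i) (finAbs_nonneg v c)

lemma polyNorm_sum_le {ι : Type*} (s : Finset ι) (P : ι → L[X]) {c : ℝ} (hc : 0 ≤ c)
    (h : ∀ i ∈ s, polyNorm (finAbs v) (P i) ≤ c) :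
    polyNorm (finAbs v) (∑ i ∈ s, P i) ≤ c := by
  classical
  induction s using Finset.induction_on with
  | empty => simpa [polyNorm_zero] using hc
  | @insert a s' hx ih =>
      rw [Finset.sum_insert hx]
      exact (polyNorm_add_le v _ _).trans
        (max_le (h a (Finset.mem_insert_self a s'))
          (ih fun i hi => h i (Finset.mem_insert_of_mem hi)))

lemma polyNorm_intMap_le_one (P : ℤ[X]) :
    polyNorm (finAbs v) (P.map (Int.castRingHom L)) ≤ 1 :=
  polyNorm_le v _ fun i => by
    rw [coeff_map]
    simpa using finAbs_intCast_le_one v (P.coeff i)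

lemma prod_dvd_factorial {M : ℕ} {s : Finset ℤ} (hs : ∀ x ∈ s, 1 ≤ x ∧ x ≤ (M : ℤ)) :
    (∏ x ∈ s, x) ∣ (M ! : ℤ) := by
  classical
  have h1 : (∏ x ∈ s, x) = ((∏ n ∈ s.image Int.toNat, n : ℕ) : ℤ) := by
    rw [Finset.prod_image (fun a ha b hb hab => by
      have := (hs a ha).1; have := (hs b hb).1; omega)]
    push_cast
    exact Finset.prod_congr rfl fun x hx => by have := (hs x hx).1; omega
  rw [h1]
  have h2 : (∏ n ∈ s.image Int.toNat, n) ∣ M ! := by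
    have hsub : s.image Int.toNat ⊆ Finset.Icc 1 M := by
      intro n hn
      obtain ⟨x, hx, rfl⟩ := Finset.mem_image.mp hn
      have := hs x hx
      simp only [Finset.mem_Icc]
      omega
    calc (∏ n ∈ s.image Int.toNat, n) ∣ ∏ n ∈ Finset.Icc 1 M, n :=
          Finset.prod_dvd_prod_of_subset _ _ _ hsub
      _ = M ! := by rw [← Finset.Ico_add_one_right_eq_Icc, Finset.prod_Ico_id_eq_factorial]
  exact_mod_cast h2

lemma prod_map_dvd_factorial {s : Finset ℤ} (f : ℤ → ℤ)
    (hinj : ∀ a ∈ s, ∀ b ∈ s, f a = f b → a = b) {M : ℕ}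
    (h : ∀ i ∈ s, 1 ≤ f i ∧ f i ≤ (M : ℤ)) : (∏ i ∈ s, f i) ∣ (M ! : ℤ) := by
  classical
  have h2 : (∏ x ∈ s.image f, x) ∣ (M ! : ℤ) := by
    apply prod_dvd_factorial
    intro x hx
    obtain ⟨i, hi, rfl⟩ := Finset.mem_image.mp hx
    exact h i hi
  rwa [Finset.prod_image hinj] at h2

lemma key_dvd {A B : ℤ} {D : ℕ} (hD : (D : ℤ) = B - A) {T : Finset ℤ}
    (hT : ∀ x ∈ T, A ≤ x ∧ x ≤ B) {j : ℤ} (hj : j ∈ T) :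
    (∏ i ∈ T.erase j, (j - i)) ∣ (D ! : ℤ) := by
  classical
  obtain ⟨hjA, hjB⟩ := hT j hj
  set M := (j - A).toNat with hM
  set N := (B - j).toNat with hN
  have hMN : M + N = D := by omega
  set s₁ := (T.erase j).filter (· < j) with hs₁
  set s₂ := (T.erase j).filter (fun i => ¬ i < j) with hs₂
  have hsplit : (∏ i ∈ T.erase j, (j - i)) = (∏ i ∈ s₁, (j - i)) * ∏ i ∈ s₂, (j - i) :=
    (Finset.prod_filter_mul_prod_filter_not _ _ _).symm
  have h₁ : (∏ i ∈ s₁, (j - i)) ∣ (M ! : ℤ) := by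
    apply prod_map_dvd_factorial _ (fun a _ b _ hab => by omega)
    intro i hi
    simp only [hs₁, Finset.mem_filter, Finset.mem_erase] at hi
    have := (hT i hi.1.2).1
    have := hi.2
    omega
  have h₂ : (∏ i ∈ s₂, (j - i)) ∣ (N ! : ℤ) := by
    have hneg : (∏ i ∈ s₂, (j - i)) = (-1) ^ s₂.card * ∏ i ∈ s₂, (i - j) := by
      rw [← Finset.prod_const, ← Finset.prod_mul_distrib]
      exact Finset.prod_congr rfl fun i _ => by ring
    have hx : (∏ i ∈ s₂, (i - j)) ∣ (N ! : ℤ) := by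
      apply prod_map_dvd_factorial _ (fun a _ b _ hab => by omega)
      intro i hi
      simp only [hs₂, Finset.mem_filter, Finset.mem_erase, not_lt] at hi
      have := (hT i hi.1.2).2
      have := hi.1.1
      have := hi.2
      omega
    rw [hneg]
    rcases neg_one_pow_eq_or ℤ s₂.card with h | h <;> rw [h]
    · rwa [one_mul]
    · rw [neg_one_mul, neg_dvd]; exact hx
  calc (∏ i ∈ T.erase j, (j - i)) = (∏ i ∈ s₁, (j - i)) * ∏ i ∈ s₂, (j - i) := hsplit
    _ ∣ (M ! : ℤ) * (N ! : ℤ) := mul_dvd_mul h₁ h₂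
    _ ∣ (D ! : ℤ) := by
        have h3 : M ! * N ! ∣ D ! := hMN ▸ Nat.factorial_mul_factorial_dvd_factorial_add M N
        exact_mod_cast h3

end StmtSix

/-- Let `F ∈ L[X]` of degree at most `d ≥ 1`, let `A ≤ B` be integers with
`D = B − A`, and let `v` be a finite place of `L`. Then the number of integers `x ∈ [A, B]`
with `|F(x)|_v < |D!|_v · |F|_v` is at most `d`. (The defining inequality is stated,
equivalently, after raising both sides to the local degree `d_v`, i.e. using `finAbs`.) -/
theorem stmt_6 {L : Type*} [Field L] [NumberField L]
    (d : ℕ) (hd : 1 ≤ d) (F : L[X]) (hdeg : F.natDegree ≤ d)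
    (A B : ℤ) (hAB : A ≤ B) (D : ℕ) (hD : (D : ℤ) = B - A)
    (v : HeightOneSpectrum (𝓞 L)) :
    {x : ℤ | x ∈ Set.Icc A B ∧
        finAbs v (F.eval ((x : ℤ) : L)) < finAbs v (D ! : L) * polyNorm (finAbs v) F}.ncard
      ≤ d := by
  classical
  set S := {x : ℤ | x ∈ Set.Icc A B ∧
      finAbs v (F.eval ((x : ℤ) : L)) < finAbs v (D ! : L) * polyNorm (finAbs v) F} with hS
  by_contra hcard
  push_neg at hcard
  have hfin : S.Finite := (Set.finite_Icc A B).subset (fun x hx => hx.1)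
  have hd1 : d + 1 ≤ hfin.toFinset.card := by
    rw [← Set.ncard_eq_toFinset_card S hfin]
    omega
  obtain ⟨T, hTsub, hTcard⟩ := Finset.exists_subset_card_eq hd1
  have hmem : ∀ x ∈ T, x ∈ S := fun x hx => (Set.Finite.mem_toFinset hfin).mp (hTsub hx)
  have hIcc : ∀ x ∈ T, A ≤ x ∧ x ≤ B := fun x hx => Set.mem_Icc.mp (hmem x hx).1
  have hinj : Set.InjOn (fun x : ℤ => (x : L)) T := fun a _ b _ h => Int.cast_injective h
  have hdeg2 : F.degree < (T.card : WithBot ℕ) := by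
    rw [hTcard]
    calc F.degree ≤ (F.natDegree : WithBot ℕ) := Polynomial.degree_le_natDegree
      _ ≤ (d : WithBot ℕ) := by exact_mod_cast hdeg
      _ < ((d + 1 : ℕ) : WithBot ℕ) := by exact_mod_cast Nat.lt_succ_self d
  have hF := Lagrange.eq_interpolate hinj hdeg2
  rw [Lagrange.interpolate_apply] at hF
  have hne : T.Nonempty := by
    rw [← Finset.card_pos, hTcard]; omega
  have hterm : ∀ j ∈ T,
      polyNorm (finAbs v) (C (F.eval ((j : ℤ) : L)) * Lagrange.basis T (fun x : ℤ => (x : L)) j)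
        < polyNorm (finAbs v) F := by
    intro j hj
    have hjlt : finAbs v (F.eval ((j : ℤ) : L)) < finAbs v (D ! : L) * polyNorm (finAbs v) F :=
      (hmem j hj).2
    set P : ℤ := ∏ i ∈ T.erase j, (j - i) with hP
    have hPne : P ≠ 0 := by
      rw [hP]
      rw [Finset.prod_ne_zero_iff]
      intro i hi
      have : i ≠ j := (Finset.mem_erase.mp hi).1
      omega
    have hPdvd : P ∣ (D ! : ℤ) := StmtSix.key_dvd hD hIcc hj
    set Q : ℤ[X] := ∏ i ∈ T.erase j, (X - C i) with hQ
    have hbasis : Lagrange.basis T (fun x : ℤ => (x : L)) j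
        = C (((P : ℤ) : L))⁻¹ * (Q.map (Int.castRingHom L)) := by
      rw [Lagrange.basis]
      simp only [Lagrange.basisDivisor]
      rw [Finset.prod_mul_distrib, ← map_prod, Finset.prod_inv_distrib]
      congr 1
      · rw [hP]
        push_cast
        rfl
      · rw [hQ, Polynomial.map_prod]
        exact Finset.prod_congr rfl fun i _ => by
          simp [Polynomial.map_sub]
    have hb1 : polyNorm (finAbs v) (Lagrange.basis T (fun x : ℤ => (x : L)) j)
        ≤ (finAbs v ((P : ℤ) : L))⁻¹ := by
      rw [hbasis]
      calc polyNorm (finAbs v) (C (((P : ℤ) : L))⁻¹ * (Q.map (Int.castRingHom L)))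
          ≤ finAbs v (((P : ℤ) : L))⁻¹ * polyNorm (finAbs v) (Q.map (Int.castRingHom L)) :=
            StmtSix.polyNorm_C_mul_le v _ _
        _ ≤ finAbs v (((P : ℤ) : L))⁻¹ * 1 := by
            apply mul_le_mul_of_nonneg_left (StmtSix.polyNorm_intMap_le_one v Q)
            rw [StmtSix.finAbs_inv]
            exact inv_nonneg.mpr (StmtSix.finAbs_nonneg v _)
        _ = (finAbs v ((P : ℤ) : L))⁻¹ := by rw [mul_one, StmtSix.finAbs_inv]
    have hPpos : 0 < finAbs v ((P : ℤ) : L) :=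
      StmtSix.finAbs_pos v (by exact_mod_cast hPne)
    have hfactne : (D ! : ℤ) ≠ 0 := by exact_mod_cast (Nat.factorial_ne_zero D)
    have hDcast : ((D ! : ℤ) : L) = ((D ! : ℕ) : L) := by push_cast; rfl
    have hDpos : 0 < finAbs v ((D ! : ℕ) : L) := by
      rw [← hDcast]
      exact StmtSix.finAbs_pos v (by exact_mod_cast hfactne)
    have hPD : finAbs v ((D ! : ℕ) : L) ≤ finAbs v ((P : ℤ) : L) := by
      rw [← hDcast]
      exact StmtSix.finAbs_dvd v hPdvd
    have hFnn : 0 ≤ polyNorm (finAbs v) F := StmtSix.polyNorm_nonneg v F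
    calc polyNorm (finAbs v) (C (F.eval ((j : ℤ) : L)) * Lagrange.basis T (fun x : ℤ => (x : L)) j)
        ≤ finAbs v (F.eval ((j : ℤ) : L))
            * polyNorm (finAbs v) (Lagrange.basis T (fun x : ℤ => (x : L)) j) :=
          StmtSix.polyNorm_C_mul_le v _ _
      _ ≤ finAbs v (F.eval ((j : ℤ) : L)) * (finAbs v ((P : ℤ) : L))⁻¹ :=
          mul_le_mul_of_nonneg_left hb1 (StmtSix.finAbs_nonneg v _)
      _ < (finAbs v (D ! : L) * polyNorm (finAbs v) F) * (finAbs v ((P : ℤ) : L))⁻¹ :=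
          mul_lt_mul_of_pos_right hjlt (inv_pos.mpr hPpos)
      _ ≤ (finAbs v (D ! : L) * polyNorm (finAbs v) F) * (finAbs v ((D ! : ℕ) : L))⁻¹ := by
          apply mul_le_mul_of_nonneg_left _ (mul_nonneg (StmtSix.finAbs_nonneg v _) hFnn)
          exact inv_anti₀ hDpos hPD
      _ = polyNorm (finAbs v) F := by
          rw [mul_right_comm, mul_inv_cancel₀ hDpos.ne', one_mul]
  -- assemble the contradiction
  obtain ⟨j₀, hj₀, hcj⟩ := Finset.exists_mem_eq_sup' hne
    (fun j => polyNorm (finAbs v)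
      (C (F.eval ((j : ℤ) : L)) * Lagrange.basis T (fun x : ℤ => (x : L)) j))
  have hc_lt : T.sup' hne (fun j => polyNorm (finAbs v)
      (C (F.eval ((j : ℤ) : L)) * Lagrange.basis T (fun x : ℤ => (x : L)) j))
      < polyNorm (finAbs v) F := by
    rw [hcj]
    exact hterm j₀ hj₀
  have hF_le : polyNorm (finAbs v) F ≤ T.sup' hne (fun j => polyNorm (finAbs v)
      (C (F.eval ((j : ℤ) : L)) * Lagrange.basis T (fun x : ℤ => (x : L)) j)) := by
    conv_lhs => rw [hF]
    apply StmtSix.polyNorm_sum_le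
    · exact le_trans (StmtSix.polyNorm_nonneg v _)
        (Finset.le_sup' (fun j => polyNorm (finAbs v)
          (C (F.eval ((j : ℤ) : L)) * Lagrange.basis T (fun x : ℤ => (x : L)) j)) hj₀)
    · intro j hj
      exact Finset.le_sup' (fun j => polyNorm (finAbs v)
        (C (F.eval ((j : ℤ) : L)) * Lagrange.basis T (fun x : ℤ => (x : L)) j)) hj
  linarith
end

section
/- Let F ∈ L[X] be a polynomial of degree at most d ≥ 1, let A ≤ B be integers with M = max{|A|, |B|}, and let v be an infinite place of L. Then the number of integers x ∈ [A, B] satisfying |F(x)|_v < |F|_v / ((2M)^d · (d+1)) is at most d. -/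
open NumberField Polynomial IsDedekindDomain Nat
open scoped Classical

section aux
variable {L : Type*} [Field L] (v : AbsoluteValue L ℝ)

lemma polyBdd (P : L[X]) : BddAbove (Set.range fun i => v (P.coeff i)) := by
  apply Set.Finite.bddAbove
  apply Set.Finite.subset
    ((P.support.image fun i => v (P.coeff i)).finite_toSet.insert 0)
  rintro _ ⟨i, rfl⟩
  by_cases h : i ∈ P.support
  · exact Set.mem_insert_iff.mpr (Or.inr (Finset.mem_coe.mpr (Finset.mem_image_of_mem _ h)))
  · simp [Polynomial.notMem_support_iff.mp h]

lemma coeff_le_polyNorm (P : L[X]) (i : ℕ) : v (P.coeff i) ≤ polyNorm ⇑v P :=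
  le_ciSup (polyBdd v P) i

lemma polyNorm_nonneg (P : L[X]) : 0 ≤ polyNorm ⇑v P :=
  le_trans (v.nonneg _) (coeff_le_polyNorm v P 0)

lemma polyNorm_le {P : L[X]} {c : ℝ} (h : ∀ i, v (P.coeff i) ≤ c) : polyNorm ⇑v P ≤ c :=
  ciSup_le h

lemma polyNorm_pos {P : L[X]} (h : P ≠ 0) : 0 < polyNorm ⇑v P :=
  lt_of_lt_of_le (v.pos (Polynomial.leadingCoeff_ne_zero.mpr h)) (coeff_le_polyNorm v P _)

lemma polyNorm_zero_eq : polyNorm ⇑v (0 : L[X]) = 0 := by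
  simp [polyNorm]

lemma polyNorm_mul_linear (P : L[X]) (c : L) :
    polyNorm ⇑v (P * (X - C c)) ≤ (1 + v c) * polyNorm ⇑v P := by
  apply polyNorm_le
  intro i
  have hc : ∀ k, (P * (X - C c)).coeff k = (P * X).coeff k - c * P.coeff k := by
    intro k; rw [mul_sub, Polynomial.coeff_sub, Polynomial.coeff_mul_C]; ring
  match i with
  | 0 =>
      rw [hc 0, Polynomial.coeff_mul_X_zero, zero_sub, v.map_neg, v.map_mul]
      calc v c * v (P.coeff 0) ≤ v c * polyNorm ⇑v P :=
            mul_le_mul_of_nonneg_left (coeff_le_polyNorm v P 0) (v.nonneg c)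
        _ ≤ (1 + v c) * polyNorm ⇑v P := by
            have := polyNorm_nonneg v P; nlinarith
  | (k+1) =>
      rw [hc (k+1), Polynomial.coeff_mul_X]
      calc v (P.coeff k - c * P.coeff (k+1))
          ≤ v (P.coeff k) + v (c * P.coeff (k+1)) := v.sub_le_add _ _
        _ ≤ polyNorm ⇑v P + v c * polyNorm ⇑v P := by
            rw [v.map_mul]
            exact add_le_add (coeff_le_polyNorm v P k)
              (mul_le_mul_of_nonneg_left (coeff_le_polyNorm v P (k+1)) (v.nonneg c))
        _ = (1 + v c) * polyNorm ⇑v P := by ring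

lemma polyNorm_one_le : polyNorm ⇑v (1 : L[X]) ≤ 1 := by
  apply polyNorm_le
  intro i
  rcases Nat.eq_zero_or_pos i with h | h
  · simp [h]
  · simp [Polynomial.coeff_one, Nat.pos_iff_ne_zero.mp h]

lemma polyNorm_prod_linear {ι : Type*} (s : Finset ι) (f : ι → L) :
    polyNorm ⇑v (∏ j ∈ s, (X - C (f j))) ≤ ∏ j ∈ s, (1 + v (f j)) := by
  classical
  induction s using Finset.induction with
  | empty => simpa using polyNorm_one_le v
  | insert a s hne ih =>
      rw [Finset.prod_insert hne, Finset.prod_insert hne, mul_comm (X - C (f a))]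
      calc polyNorm ⇑v ((∏ j ∈ s, (X - C (f j))) * (X - C (f a)))
          ≤ (1 + v (f a)) * polyNorm ⇑v (∏ j ∈ s, (X - C (f j))) :=
            polyNorm_mul_linear v _ _
        _ ≤ (1 + v (f a)) * ∏ j ∈ s, (1 + v (f j)) := by
            apply mul_le_mul_of_nonneg_left ih
            have := v.nonneg (f a); linarith

lemma polyNorm_C_mul (a : L) (P : L[X]) :
    polyNorm ⇑v (C a * P) ≤ v a * polyNorm ⇑v P := by
  apply polyNorm_le
  intro i
  rw [Polynomial.coeff_C_mul, v.map_mul]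
  exact mul_le_mul_of_nonneg_left (coeff_le_polyNorm v P i) (v.nonneg a)

lemma polyNorm_sum_le {ι : Type*} (s : Finset ι) (P : ι → L[X]) :
    polyNorm ⇑v (∑ i ∈ s, P i) ≤ ∑ i ∈ s, polyNorm ⇑v (P i) := by
  apply polyNorm_le
  intro k
  rw [Polynomial.finset_sum_coeff]
  exact le_trans (v.sum_le _ _) (Finset.sum_le_sum fun i _ => coeff_le_polyNorm v (P i) k)

end aux

lemma infinitePlace_intCast {L : Type*} [Field L] [NumberField L]
    (w : InfinitePlace L) (n : ℤ) : w ((n : ℤ) : L) = |(n : ℝ)| := by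
  rw [← NumberField.InfinitePlace.norm_embedding_eq, map_intCast]
  simp


/-- Let `F ∈ L[X]` of degree at most `d ≥ 1`, let `A ≤ B` be integers with
`M = max{|A|, |B|}`, and let `v` be an infinite place of `L`. Then the number of integers
`x ∈ [A, B]` with `|F(x)|_v < |F|_v / ((2M)^d · (d+1))` is at most `d`. -/
theorem stmt_7 {L : Type*} [Field L] [NumberField L]
    (d : ℕ) (hd : 1 ≤ d) (F : L[X]) (hdeg : F.natDegree ≤ d)
    (A B : ℤ) (hAB : A ≤ B) (M : ℤ) (hM : M = max |A| |B|)
    (v : InfinitePlace L) :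
    {x : ℤ | x ∈ Set.Icc A B ∧
        v (F.eval ((x : ℤ) : L)) <
          polyNorm (⇑v) F / ((2 * (M : ℝ)) ^ d * ((d : ℝ) + 1))}.ncard ≤ d := by

  set S := {x : ℤ | x ∈ Set.Icc A B ∧
        v (F.eval ((x : ℤ) : L)) <
          polyNorm (⇑v) F / ((2 * (M : ℝ)) ^ d * ((d : ℝ) + 1))} with hS
  have hd0 : d ≠ 0 := Nat.one_le_iff_ne_zero.mp hd
  by_contra hcon
  push_neg at hcon
  have hSsub : S ⊆ Set.Icc A B := fun x hx => hx.1
  have hSfin : S.Finite := (Set.finite_Icc A B).subset hSsub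
  have hF : F ≠ 0 := by
    rintro rfl
    have hempty : S = ∅ := by
      ext x
      have : polyNorm ⇑v (0 : L[X]) = 0 := polyNorm_zero_eq v.1
      simp [hS, this]
    rw [hempty] at hcon
    simp at hcon
  have hN : 0 < polyNorm ⇑v F := polyNorm_pos v.1 hF
  have hMnn : (0:ℤ) ≤ M := hM ▸ le_trans (abs_nonneg A) (le_max_left _ _)
  by_cases hMz : M = 0
  · have hempty : S = ∅ := by
      ext x
      simp only [hS, Set.mem_setOf_eq, Set.mem_empty_iff_false, iff_false, not_and]
      intro _
      rw [hMz]
      push_cast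
      rw [mul_zero, zero_pow hd0, zero_mul, div_zero]
      exact not_lt.mpr (v.1.nonneg _)
    rw [hempty] at hcon
    simp at hcon
  have hM1 : (1:ℝ) ≤ (M:ℝ) := by
    have : (1:ℤ) ≤ M := lt_of_le_of_ne hMnn (Ne.symm hMz)
    exact_mod_cast this
  set c : ℝ := (2 * (M:ℝ)) ^ d with hc
  have hcpos : 0 < c := pow_pos (by linarith) d
  -- extract d+1 points
  have hcard : d + 1 ≤ hSfin.toFinset.card := by
    rw [← Set.ncard_eq_toFinset_card S hSfin]
    omega
  obtain ⟨t, hts, htcard⟩ := Finset.exists_subset_card_eq hcard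
  have htS : ∀ x ∈ t, x ∈ S := fun x hx => hSfin.mem_toFinset.mp (hts hx)
  set vv : ℤ → L := fun x => (x : L) with hvv
  have hinj : Set.InjOn vv ↑t := fun a _ b _ h => by
    simpa [hvv] using h
  have hdeg' : F.degree < (t.card : ℕ) := by
    rw [htcard]
    calc F.degree ≤ (F.natDegree : WithBot ℕ) := Polynomial.degree_le_natDegree
      _ < ((d + 1 : ℕ) : WithBot ℕ) := by
          exact_mod_cast Nat.lt_succ_of_le hdeg
  have hrep := Lagrange.eq_interpolate hinj hdeg'
  rw [Lagrange.interpolate_apply] at hrep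
  -- bound on basis polynomials
  have hbasis : ∀ i ∈ t, polyNorm ⇑v (Lagrange.basis t vv i) ≤ c := by
    intro i hi
    have hsplit : Lagrange.basis t vv i =
        C (∏ j ∈ t.erase i, (vv i - vv j)⁻¹) * ∏ j ∈ t.erase i, (X - C (vv j)) := by
      rw [Lagrange.basis]
      simp_rw [Lagrange.basisDivisor]
      rw [Finset.prod_mul_distrib, map_prod]
    rw [hsplit]
    have habs : ∀ j ∈ t.erase i, v (vv j) ≤ (M:ℝ) := by
      intro j hj
      have hjS := htS j (Finset.mem_of_mem_erase hj)
      have hj1 : |j| ≤ M := by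
        rw [hM, abs_le]
        refine ⟨?_, le_trans hjS.1.2 ((le_abs_self B).trans (le_max_right _ _))⟩
        calc -(max |A| |B|) ≤ -|A| := neg_le_neg (le_max_left _ _)
          _ ≤ A := neg_abs_le A
          _ ≤ j := hjS.1.1
      rw [infinitePlace_intCast v j, ← Int.cast_abs]
      exact_mod_cast hj1
    calc polyNorm ⇑v (C (∏ j ∈ t.erase i, (vv i - vv j)⁻¹) * ∏ j ∈ t.erase i, (X - C (vv j)))
        ≤ v (∏ j ∈ t.erase i, (vv i - vv j)⁻¹) *
            polyNorm ⇑v (∏ j ∈ t.erase i, (X - C (vv j))) := polyNorm_C_mul v.1 _ _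
      _ ≤ 1 * ∏ j ∈ t.erase i, (1 + v (vv j)) := by
          apply mul_le_mul
          · rw [map_prod]
            apply Finset.prod_le_one
            · intro j _; exact v.1.nonneg _
            · intro j hj
              have hji : j ≠ i := Finset.ne_of_mem_erase hj
              have hne : (i - j : ℤ) ≠ 0 := sub_ne_zero.mpr (Ne.symm hji)
              have h1 : (1:ℝ) ≤ |((i - j : ℤ) : ℝ)| := by
                rw [← Int.cast_abs]
                exact_mod_cast Int.one_le_abs hne
              have : vv i - vv j = (((i - j : ℤ)) : L) := by push_cast [hvv]; ring
              rw [map_inv₀, this, infinitePlace_intCast]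
              exact inv_le_one_of_one_le₀ h1
          · exact polyNorm_prod_linear v.1 _ _
          · exact polyNorm_nonneg v.1 _
          · exact zero_le_one
      _ ≤ 1 * ∏ j ∈ t.erase i, (2 * (M:ℝ)) := by
          apply mul_le_mul_of_nonneg_left _ zero_le_one
          apply Finset.prod_le_prod
          · intro j _; positivity
          · intro j hj
            have := habs j hj
            linarith
      _ = c := by
          rw [one_mul, Finset.prod_const, Finset.card_erase_of_mem hi, htcard, hc]
          norm_num
  -- main estimate
  have htne : t.Nonempty := Finset.card_pos.mp (by omega)
  have key : polyNorm ⇑v F < polyNorm ⇑v F := by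
    conv_lhs => rw [hrep]
    calc polyNorm ⇑v (∑ i ∈ t, C (F.eval (vv i)) * Lagrange.basis t vv i)
        ≤ ∑ i ∈ t, polyNorm ⇑v (C (F.eval (vv i)) * Lagrange.basis t vv i) :=
          polyNorm_sum_le v.1 _ _
      _ ≤ ∑ i ∈ t, v (F.eval (vv i)) * c := by
          apply Finset.sum_le_sum
          intro i hi
          calc polyNorm ⇑v (C (F.eval (vv i)) * Lagrange.basis t vv i)
              ≤ v (F.eval (vv i)) * polyNorm ⇑v (Lagrange.basis t vv i) :=
                polyNorm_C_mul v.1 _ _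
            _ ≤ v (F.eval (vv i)) * c :=
                mul_le_mul_of_nonneg_left (hbasis i hi) (v.1.nonneg _)
      _ < ∑ _i ∈ t, (polyNorm ⇑v F / (c * ((d:ℝ) + 1))) * c := by
          apply Finset.sum_lt_sum_of_nonempty htne
          intro i hi
          exact mul_lt_mul_of_pos_right ((htS i hi).2) hcpos
      _ = polyNorm ⇑v F := by
          rw [Finset.sum_const, htcard, nsmul_eq_mul]
          field_simp
          push_cast
          ring
  exact lt_irrefl _ key
end

section
/- Let L be a number field of degree d_L over ℚ, let (ε_i)_{i∈I} be a fundamental system of units of Z_L, and set C = 2·d_L·max_{i∈I} h(ε_i) (with C = 0 if the unit rank is zero). Then every nonzero principal ideal 𝔞 of Z_L admits a generator a ∈ Z_L such that h(a) ≤ max{C, h°(𝔞)}. -/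
open NumberField Polynomial IsDedekindDomain Nat
open scoped Classical

/-! ### Auxiliary lemmas -/

section BeckFiala

variable {W : Type*} [Fintype W] {k : ℕ}

lemma bf01 (a : Fin k → W → ℝ) (t : ℝ) (ht0 : 0 ≤ t) (ht : ∀ i, ∑ w, |a i w| ≤ t) :
    ∀ (A : Finset (Fin k)) (θ : Fin k → ℝ), (∀ i, 0 ≤ θ i) → (∀ i, θ i ≤ 1) →
    (∀ i ∉ A, θ i = 0 ∨ θ i = 1) →
    ∃ u : Fin k → ℝ, (∀ i, u i = 0 ∨ u i = 1) ∧ (∀ i ∉ A, u i = θ i) ∧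
      ∀ w, |∑ i, (u i - θ i) * a i w| ≤ min (∑ i ∈ A, |a i w|) t := by
  intro A
  induction A using Finset.strongInduction with
  | _ A IH =>
  intro θ hθ0 hθ1 hint
  by_cases hj : ∃ j ∈ A, θ j = 0 ∨ θ j = 1
  · obtain ⟨j, hjA, hj01⟩ := hj
    obtain ⟨u, hu01, huθ, hub⟩ := IH (A.erase j) (Finset.erase_ssubset hjA) θ hθ0 hθ1
      (fun i hi => by
        by_cases h : i = j
        · subst h; exact hj01
        · exact hint i (fun hiA => hi (Finset.mem_erase.mpr ⟨h, hiA⟩)))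
    refine ⟨u, hu01, fun i hi => huθ i (fun hi' => hi (Finset.mem_of_mem_erase hi')),
      fun w => ?_⟩
    refine le_trans (hub w) (min_le_min ?_ le_rfl)
    exact Finset.sum_le_sum_of_subset_of_nonneg (Finset.erase_subset _ _)
      (fun _ _ _ => abs_nonneg _)
  · push_neg at hj
    rcases Finset.eq_empty_or_nonempty A with hA | hA
    · subst hA
      refine ⟨θ, fun i => hint i (by simp), fun i _ => rfl, fun w => ?_⟩
      simp only [sub_self, zero_mul, Finset.sum_const_zero, abs_zero, Finset.sum_empty]
      exact le_min le_rfl ht0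
    · -- main case : all θ i strictly inside (0,1) for i ∈ A
      have hθopen : ∀ i ∈ A, 0 < θ i ∧ θ i < 1 := fun i hi =>
        ⟨lt_of_le_of_ne (hθ0 i) (Ne.symm (hj i hi).1), lt_of_le_of_ne (hθ1 i) (hj i hi).2⟩
      set S : W → ℝ := fun w => ∑ i ∈ A, |a i w| with hS
      set D : Finset W := Finset.univ.filter (fun w => t < S w) with hD
      have hSnonneg : ∀ w, 0 ≤ S w := fun w => Finset.sum_nonneg fun _ _ => abs_nonneg _
      have hsumS : ∑ w, S w ≤ (A.card : ℝ) * t := by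
        rw [hS]
        rw [Finset.sum_comm]
        calc ∑ i ∈ A, ∑ w, |a i w| ≤ ∑ i ∈ A, t := Finset.sum_le_sum fun i _ => ht i
          _ = (A.card : ℝ) * t := by rw [Finset.sum_const, nsmul_eq_mul]
      have hDcard : D.card < A.card := by
        rcases Finset.eq_empty_or_nonempty D with hDe | hDne
        · rw [hDe]; simpa [Finset.card_pos] using hA
        · have h2 : (D.card : ℝ) * t < ∑ w ∈ D, S w := by
            have := Finset.sum_lt_sum_of_nonempty hDne
              (f := fun _ => t) (g := S) (fun w hw => (Finset.mem_filter.mp hw).2)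
            simpa [Finset.sum_const, nsmul_eq_mul] using this
          have h3 : ∑ w ∈ D, S w ≤ ∑ w, S w :=
            Finset.sum_le_sum_of_subset_of_nonneg (Finset.subset_univ _)
              (fun w _ _ => hSnonneg w)
          have h5 : (D.card : ℝ) * t < (A.card : ℝ) * t := lt_of_lt_of_le h2 (h3.trans hsumS)
          have htpos : 0 < t := by
            rcases lt_or_eq_of_le ht0 with h | h
            · exact h
            · exfalso
              obtain ⟨w, hw⟩ := hDne
              have h1 : t < S w := (Finset.mem_filter.mp hw).2
              have : S w ≤ 0 := by
                have := hsumS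
                nlinarith [Finset.single_le_sum (f := S) (fun w _ => hSnonneg w)
                  (Finset.mem_univ w)]
              linarith
          have := (mul_lt_mul_iff_left₀ htpos).mp h5
          exact_mod_cast this
      -- find a nonzero kernel vector
      have hker : ∃ ξ : Fin k → ℝ, (∀ i ∉ A, ξ i = 0) ∧ ξ ≠ 0 ∧
          ∀ w ∈ D, ∑ i, ξ i * a i w = 0 := by
        set Phi : (↥A → ℝ) →ₗ[ℝ] (↥D → ℝ) :=
          LinearMap.pi (fun w => ∑ i : ↥A, a i.val w.val • LinearMap.proj i)
          with hPhi
        have hnotinj : ¬ Function.Injective Phi := by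
          intro hinj
          have := LinearMap.finrank_le_finrank_of_injective hinj
          rw [Module.finrank_pi, Module.finrank_pi] at this
          simp only [Fintype.card_coe] at this
          omega
        rw [Function.not_injective_iff] at hnotinj
        obtain ⟨x, y, hxy, hne⟩ := hnotinj
        refine ⟨fun i => if h : i ∈ A then (x - y) ⟨i, h⟩ else 0, fun i hi => dif_neg hi, ?_, ?_⟩
        · intro hzero
          apply hne
          ext i
          have := congrFun hzero i.val
          simp only [dif_pos i.2] at this
          have h2 : x i - y i = 0 := by simpa using this
          linarith
        · intro w hw
          have hPhieq : Phi x ⟨w, hw⟩ = Phi y ⟨w, hw⟩ := by rw [hxy]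
          simp only [hPhi, LinearMap.pi_apply, LinearMap.sum_apply, LinearMap.smul_apply,
            LinearMap.proj_apply, smul_eq_mul] at hPhieq
          have : ∑ i, (fun i => if h : i ∈ A then (x - y) ⟨i, h⟩ else 0) i * a i w
              = ∑ i ∈ A, (fun i => if h : i ∈ A then (x - y) ⟨i, h⟩ else 0) i * a i w := by
            apply (Finset.sum_subset (Finset.subset_univ _) _).symm
            intro i _ hi
            simp only [dif_neg hi, zero_mul]
          rw [this]
          rw [← Finset.sum_coe_sort]
          have : ∀ i : ↥A,
              (fun i => if h : i ∈ A then (x - y) ⟨i, h⟩ else 0) i.val * a i.val w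
              = a i.val w * x i - a i.val w * y i := by
            intro i
            simp only [dif_pos i.2, Subtype.coe_eta, Pi.sub_apply]
            ring
          rw [Finset.sum_congr rfl (fun i _ => this i)]
          rw [Finset.sum_sub_distrib]
          rw [sub_eq_zero]
          exact hPhieq
      obtain ⟨ξ, hξ0, hξne, hξker⟩ := hker
      set J : Finset (Fin k) := Finset.univ.filter (fun i => ξ i ≠ 0) with hJdef
      have hJA : J ⊆ A := by
        intro i hi
        by_contra h
        exact (Finset.mem_filter.mp hi).2 (hξ0 i h)
      have hJne : J.Nonempty := by
        obtain ⟨i₀, hi₀⟩ := Function.ne_iff.mp hξne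
        exact ⟨i₀, Finset.mem_filter.mpr ⟨Finset.mem_univ _, by simpa using hi₀⟩⟩
      set bnd : Fin k → ℝ := fun i => if 0 < ξ i then (1 - θ i) / ξ i else θ i / (-ξ i) with hbnd
      have hbnd1 : ∀ i, 0 < ξ i → bnd i = (1 - θ i) / ξ i := fun i h => by
        simp only [hbnd]; rw [if_pos h]
      have hbnd2 : ∀ i, ¬ 0 < ξ i → bnd i = θ i / (-ξ i) := fun i h => by
        simp only [hbnd]; rw [if_neg h]
      have hbndpos : ∀ i ∈ J, 0 < bnd i := by
        intro i hi
        have hiA := hJA hi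
        have hne : ξ i ≠ 0 := (Finset.mem_filter.mp hi).2
        obtain ⟨h1, h2⟩ := hθopen i hiA
        by_cases hpos : 0 < ξ i
        · rw [hbnd1 i hpos]; exact div_pos (by linarith) hpos
        · rw [hbnd2 i hpos]
          have : ξ i < 0 := lt_of_le_of_ne (not_lt.mp hpos) hne
          exact div_pos h1 (by linarith)
      set τ : ℝ := J.inf' hJne bnd with hτdef
      have hτle : ∀ i ∈ J, τ ≤ bnd i := fun i hi => Finset.inf'_le _ hi
      have hτpos : 0 < τ := by
        rw [hτdef, Finset.lt_inf'_iff]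
        exact hbndpos
      set θ' : Fin k → ℝ := fun i => θ i + τ * ξ i with hθ'def
      have hθ'eq : ∀ i ∉ J, θ' i = θ i := by
        intro i hi
        have : ξ i = 0 := by
          by_contra h
          exact hi (Finset.mem_filter.mpr ⟨Finset.mem_univ _, h⟩)
        simp [hθ'def, this]
      have hθ'0 : ∀ i, 0 ≤ θ' i := by
        intro i
        by_cases hi : i ∈ J
        · have hne : ξ i ≠ 0 := (Finset.mem_filter.mp hi).2
          by_cases hpos : 0 < ξ i
          · have : 0 ≤ τ * ξ i := le_of_lt (mul_pos hτpos hpos)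
            have := hθ0 i
            simp only [hθ'def]; linarith
          · have hneg : ξ i < 0 := lt_of_le_of_ne (not_lt.mp hpos) hne
            have h1 : τ ≤ bnd i := hτle i hi
            have h2 : bnd i = θ i / (-ξ i) := hbnd2 i hpos
            have h3 : τ * ξ i ≥ (θ i / (-ξ i)) * ξ i := by
              apply mul_le_mul_of_nonpos_right _ (le_of_lt hneg)
              linarith [h1, h2]
            have h4 : (θ i / (-ξ i)) * ξ i = -θ i := by
              rw [div_mul_eq_mul_div, div_eq_iff (neg_ne_zero.mpr hne)]; ring
            simp only [hθ'def]
            rw [h4] at h3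
            linarith
        · rw [hθ'eq i hi]; exact hθ0 i
      have hθ'1 : ∀ i, θ' i ≤ 1 := by
        intro i
        by_cases hi : i ∈ J
        · have hne : ξ i ≠ 0 := (Finset.mem_filter.mp hi).2
          by_cases hpos : 0 < ξ i
          · have h1 : τ ≤ bnd i := hτle i hi
            have h2 : bnd i = (1 - θ i) / ξ i := hbnd1 i hpos
            have h3 : τ * ξ i ≤ ((1 - θ i) / ξ i) * ξ i :=
              mul_le_mul_of_nonneg_right (by linarith [h1, h2]) (le_of_lt hpos)
            have h4 : ((1 - θ i) / ξ i) * ξ i = 1 - θ i := div_mul_cancel₀ _ hne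
            simp only [hθ'def]
            rw [h4] at h3
            linarith
          · have hneg : ξ i < 0 := lt_of_le_of_ne (not_lt.mp hpos) hne
            have : τ * ξ i ≤ 0 := le_of_lt (mul_neg_of_pos_of_neg hτpos hneg)
            have := hθ1 i
            simp only [hθ'def]; linarith
        · rw [hθ'eq i hi]; exact hθ1 i
      -- some coordinate of J becomes integral
      obtain ⟨j, hjJ, hjeq⟩ := Finset.exists_mem_eq_inf' hJne bnd
      have hτj : τ = bnd j := by rw [hτdef, hjeq]
      have hjint : θ' j = 0 ∨ θ' j = 1 := by
        have hne : ξ j ≠ 0 := (Finset.mem_filter.mp hjJ).2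
        by_cases hpos : 0 < ξ j
        · right
          have hb : bnd j = (1 - θ j) / ξ j := hbnd1 j hpos
          simp only [hθ'def]
          rw [hτj, hb, div_mul_cancel₀ _ hne]
          ring
        · left
          have hb : bnd j = θ j / (-ξ j) := hbnd2 j hpos
          have hmul : (θ j / (-ξ j)) * ξ j = -θ j := by
            rw [div_mul_eq_mul_div, div_eq_iff (neg_ne_zero.mpr hne)]; ring
          simp only [hθ'def]
          rw [hτj, hb, hmul]
          ring
      set A' : Finset (Fin k) := A.filter (fun i => θ' i ≠ 0 ∧ θ' i ≠ 1) with hA'def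
      have hA'ss : A' ⊂ A := by
        rw [Finset.ssubset_iff_of_subset (Finset.filter_subset _ _)]
        refine ⟨j, hJA hjJ, ?_⟩
        intro hmem
        have := (Finset.mem_filter.mp hmem).2
        rcases hjint with h | h
        · exact this.1 h
        · exact this.2 h
      obtain ⟨u, hu01, huθ', hub'⟩ := IH A' hA'ss θ' hθ'0 hθ'1
        (fun i hi => by
          by_cases hiA : i ∈ A
          · by_contra hcon
            push_neg at hcon
            exact hi (Finset.mem_filter.mpr ⟨hiA, hcon⟩)
          · rw [hθ'eq i (fun hiJ => hiA (hJA hiJ))]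
            exact hint i hiA)
      have hfix : ∀ i ∉ A, u i = θ i := by
        intro i hi
        rw [huθ' i (fun hmem => hi (Finset.filter_subset _ _ hmem))]
        exact hθ'eq i (fun hiJ => hi (hJA hiJ))
      refine ⟨u, hu01, hfix, ?_⟩
      intro w
      by_cases hwD : w ∈ D
      · -- use the recursive bound and kernel property
        have hsplit : ∑ i, (u i - θ i) * a i w
            = (∑ i, (u i - θ' i) * a i w) + τ * ∑ i, ξ i * a i w := by
          rw [Finset.mul_sum, ← Finset.sum_add_distrib]
          apply Finset.sum_congr rfl
          intro i _
          simp only [hθ'def]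
          ring
        rw [hsplit, hξker w hwD, mul_zero, add_zero]
        have := hub' w
        have hmin : min (∑ i ∈ A', |a i w|) t ≤ t := min_le_right _ _
        have hSw : t < S w := (Finset.mem_filter.mp hwD).2
        rw [min_eq_right (le_of_lt hSw)]
        exact le_trans this hmin
      · -- direct bound
        have hSw : S w ≤ t := by
          by_contra h
          exact hwD (Finset.mem_filter.mpr ⟨Finset.mem_univ _, not_le.mp h⟩)
        rw [min_eq_left hSw]
        have h1 : ∑ i, (u i - θ i) * a i w = ∑ i ∈ A, (u i - θ i) * a i w := by
          apply (Finset.sum_subset (Finset.subset_univ _) _).symm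
          intro i _ hi
          rw [hfix i hi, sub_self, zero_mul]
        rw [h1]
        calc |∑ i ∈ A, (u i - θ i) * a i w| ≤ ∑ i ∈ A, |(u i - θ i) * a i w| :=
              Finset.abs_sum_le_sum_abs _ _
          _ ≤ ∑ i ∈ A, |a i w| := by
              apply Finset.sum_le_sum
              intro i _
              rw [abs_mul]
              have hu : 0 ≤ u i ∧ u i ≤ 1 := by
                rcases hu01 i with h | h <;> rw [h] <;> norm_num
              have habs : |u i - θ i| ≤ 1 := by
                rw [abs_le]
                constructor <;> [linarith [hu.1, hθ1 i]; linarith [hu.2, hθ0 i]]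
              nlinarith [abs_nonneg (a i w), habs, abs_nonneg (u i - θ i)]
          _ = S w := rfl

lemma bf (a : Fin k → W → ℝ) (t : ℝ) (ht0 : 0 ≤ t) (ht : ∀ i, ∑ w, |a i w| ≤ t)
    (x : Fin k → ℝ) :
    ∃ u : Fin k → ℤ, ∀ w, |∑ i, (x i - (u i : ℝ)) * a i w| ≤ t := by
  obtain ⟨u01, hu01, -, hub⟩ := bf01 a t ht0 ht Finset.univ (fun i => Int.fract (x i))
    (fun i => Int.fract_nonneg _) (fun i => le_of_lt (Int.fract_lt_one _))
    (fun i hi => absurd (Finset.mem_univ i) hi)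
  refine ⟨fun i => ⌊x i⌋ + (if u01 i = 1 then 1 else 0), fun w => ?_⟩
  have key : ∀ i, x i - ((⌊x i⌋ + (if u01 i = 1 then 1 else 0) : ℤ) : ℝ)
      = -(u01 i - Int.fract (x i)) := by
    intro i
    rcases hu01 i with h | h
    · rw [h, if_neg (by norm_num : ¬ (0:ℝ) = 1)]
      rw [Int.fract]
      push_cast
      ring
    · rw [h, if_pos rfl]
      rw [Int.fract]
      push_cast
      ring
  have : ∑ i, (x i - ((⌊x i⌋ + (if u01 i = 1 then 1 else 0) : ℤ) : ℝ)) * a i w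
      = -(∑ i, (u01 i - Int.fract (x i)) * a i w) := by
    rw [← Finset.sum_neg_distrib]
    apply Finset.sum_congr rfl
    intro i _
    rw [key i]
    ring
  rw [this, abs_neg]
  exact le_trans (hub w) (min_le_right _ _)

end BeckFiala

section NF

variable {L : Type*} [Field L] [NumberField L]

lemma finAbs_le_one (x : 𝓞 L) (v : HeightOneSpectrum (𝓞 L)) :
    finAbs v (x : L) ≤ 1 := by
  unfold finAbs
  split_ifs with h
  · norm_num
  · have hval : v.valuation L (x : L) ≤ 1 := v.valuation_le_one x
    have hne : v.valuation L (x : L) ≠ 0 := (v.valuation L).ne_zero_iff.mpr h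
    have h0 : 0 ≤ intValOn v (x : L) := by
      unfold intValOn
      rw [dif_neg h]
      have : WithZero.unzero hne ≤ 1 := by
        have := hval
        rwa [← WithZero.coe_unzero hne, ← WithZero.coe_one, WithZero.coe_le_coe] at this
      have : Multiplicative.toAdd (WithZero.unzero hne) ≤ 0 := this
      omega
    have hN : (1 : ℝ) ≤ (Ideal.absNorm v.asIdeal : ℝ) := by
      have : Ideal.absNorm v.asIdeal ≠ 0 := by
        rw [ne_eq, Ideal.absNorm_eq_zero_iff]
        exact v.ne_bot
      exact_mod_cast Nat.one_le_iff_ne_zero.mpr this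
    calc (Ideal.absNorm v.asIdeal : ℝ) ^ (-(intValOn v (x:L)))
        ≤ (Ideal.absNorm v.asIdeal : ℝ) ^ (0:ℤ) := by
          apply zpow_le_zpow_right₀ hN; omega
      _ = 1 := by norm_num

lemma log_max_one {t : ℝ} (ht : 0 < t) : Real.log (max 1 t) = max 0 (Real.log t) := by
  rcases le_or_gt 1 t with h | h
  · rw [max_eq_right h, max_eq_right (Real.log_nonneg h)]
  · rw [max_eq_left (le_of_lt h), Real.log_one,
      max_eq_left (le_of_lt (Real.log_neg ht h))]

lemma elemHeight_int (x : 𝓞 L) (hx : x ≠ 0) :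
    elemHeight (x : L) = (1 / (Module.finrank ℚ L : ℝ)) *
      ∑ w : InfinitePlace L, (InfinitePlace.mult w : ℝ) * max 0 (Real.log (w (x : L))) := by
  have hxL : (x : L) ≠ 0 := by exact_mod_cast hx
  unfold elemHeight
  have hfin : (∑ᶠ v : HeightOneSpectrum (𝓞 L), Real.log (max 1 (finAbs v (x : L)))) = 0 := by
    have : (fun v : HeightOneSpectrum (𝓞 L) => Real.log (max 1 (finAbs v (x : L))))
        = fun _ => 0 := by
      funext v
      rw [max_eq_left (finAbs_le_one x v), Real.log_one]
    rw [this, finsum_zero]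
  rw [hfin, zero_add]
  congr 1
  apply Finset.sum_congr rfl
  intro w _
  have hpos : 0 < w (x : L) := by
    have := (map_ne_zero w).mpr hxL
    positivity
  rw [log_max_one hpos]

lemma sum_mult_log' (x : 𝓞 L) (hx : x ≠ 0) :
    ∑ w : InfinitePlace L, (InfinitePlace.mult w : ℝ) * Real.log (w (x : L)) =
      Real.log |((Algebra.norm ℤ x : ℤ) : ℝ)| := by
  have hprod := NumberField.InfinitePlace.prod_eq_abs_norm (x : L)
  have hlog := congrArg Real.log hprod
  have hxL : (x : L) ≠ 0 := by exact_mod_cast hx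
  rw [Real.log_prod] at hlog
  · have : ∀ w : InfinitePlace L, Real.log (w (x:L) ^ InfinitePlace.mult w)
        = (InfinitePlace.mult w : ℝ) * Real.log (w (x:L)) := fun w => by
      rw [Real.log_pow]
    simp_rw [this] at hlog
    rw [hlog]
    congr 1
    rw [← Algebra.coe_norm_int]
    push_cast

    norm_cast
  · intro w _
    have : w (x:L) ≠ 0 := by
      simpa using (map_ne_zero w).mpr hxL
    positivity

lemma norm_unit_abs_one (u : (𝓞 L)ˣ) : |((Algebra.norm ℤ (u : 𝓞 L) : ℤ) : ℝ)| = 1 := by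
  have : IsUnit (Algebra.norm ℤ (u : 𝓞 L)) := u.isUnit.map (Algebra.norm ℤ)
  rcases Int.isUnit_iff.mp this with h | h <;> rw [h] <;> norm_num

lemma sum_mult_log_unit (u : (𝓞 L)ˣ) :
    ∑ w : InfinitePlace L, (InfinitePlace.mult w : ℝ) * Real.log (w ((u : 𝓞 L) : L)) = 0 := by
  rw [sum_mult_log' (u : 𝓞 L) u.ne_zero, norm_unit_abs_one, Real.log_one]

lemma elemHeight_unit_nonneg (u : (𝓞 L)ˣ) : 0 ≤ elemHeight ((u : 𝓞 L) : L) := by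
  rw [elemHeight_int (u : 𝓞 L) u.ne_zero]
  have hd0 : (0:ℝ) < (Module.finrank ℚ L : ℝ) := by exact_mod_cast Module.finrank_pos
  apply mul_nonneg (by positivity)
  apply Finset.sum_nonneg
  intro w _
  exact mul_nonneg (by positivity) (le_max_left _ _)

lemma sum_abs_mult_log_unit (u : (𝓞 L)ˣ) :
    ∑ w : InfinitePlace L, |(InfinitePlace.mult w : ℝ) * Real.log (w ((u : 𝓞 L) : L))|
      = 2 * (Module.finrank ℚ L : ℝ) * elemHeight ((u : 𝓞 L) : L) := by
  have hd0 : (0:ℝ) < (Module.finrank ℚ L : ℝ) := by exact_mod_cast Module.finrank_pos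
  have h1 : ∀ w : InfinitePlace L, |(InfinitePlace.mult w : ℝ) * Real.log (w ((u : 𝓞 L) : L))|
      = 2 * ((InfinitePlace.mult w : ℝ) * max 0 (Real.log (w ((u : 𝓞 L) : L))))
        - (InfinitePlace.mult w : ℝ) * Real.log (w ((u : 𝓞 L) : L)) := by
    intro w
    have hm : (0:ℝ) ≤ (InfinitePlace.mult w : ℝ) := by positivity
    rcases le_or_gt 0 (Real.log (w ((u : 𝓞 L) : L))) with h | h
    · rw [max_eq_right h, abs_of_nonneg (mul_nonneg hm h)]; ring
    · rw [max_eq_left (le_of_lt h), abs_of_nonpos (by nlinarith)]; ring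
  rw [Finset.sum_congr rfl (fun w _ => h1 w), Finset.sum_sub_distrib, sum_mult_log_unit,
    sub_zero, ← Finset.mul_sum]
  rw [elemHeight_int (u : 𝓞 L) u.ne_zero]
  field_simp

lemma log_w_prod_zpow {k : ℕ} (w : InfinitePlace L) (g : Fin k → (𝓞 L)ˣ) (e : Fin k → ℤ) :
    Real.log (w (((∏ i, g i ^ e i : (𝓞 L)ˣ) : 𝓞 L) : L))
      = ∑ i, (e i : ℝ) * Real.log (w ((g i : 𝓞 L) : L)) := by
  have hmul : ∀ v v' : Additive (𝓞 L)ˣ,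
      Real.log (w (((Additive.toMul (v + v') : (𝓞 L)ˣ) : 𝓞 L) : L))
        = Real.log (w (((Additive.toMul v : (𝓞 L)ˣ) : 𝓞 L) : L))
          + Real.log (w (((Additive.toMul v' : (𝓞 L)ˣ) : 𝓞 L) : L)) := by
    intro v v'
    have hcoe : (((Additive.toMul (v + v') : (𝓞 L)ˣ) : 𝓞 L) : L)
        = (((Additive.toMul v : (𝓞 L)ˣ) : 𝓞 L) : L) * (((Additive.toMul v' : (𝓞 L)ˣ) : 𝓞 L) : L) := by
      push_cast [toMul_add]
      rfl
    rw [hcoe, map_mul]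
    apply Real.log_mul
    · exact (map_ne_zero w).mpr (by exact_mod_cast (Additive.toMul v).ne_zero)
    · exact (map_ne_zero w).mpr (by exact_mod_cast (Additive.toMul v').ne_zero)
  set F : Additive (𝓞 L)ˣ →+ ℝ :=
    AddMonoidHom.mk' (fun v => Real.log (w (((Additive.toMul v : (𝓞 L)ˣ) : 𝓞 L) : L))) hmul
    with hF
  have h1 : Additive.ofMul (∏ i, g i ^ e i) = ∑ i, e i • Additive.ofMul (g i) := by
    rw [ofMul_prod]
    exact Finset.sum_congr rfl (fun i _ => ofMul_zpow _ _)
  have h2 : Real.log (w (((∏ i, g i ^ e i : (𝓞 L)ˣ) : 𝓞 L) : L))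
      = F (Additive.ofMul (∏ i, g i ^ e i)) := rfl
  rw [h2, h1, map_sum]
  apply Finset.sum_congr rfl
  intro i _
  rw [map_zsmul, zsmul_eq_mul]
  rfl

open NumberField.Units NumberField.Units.dirichletUnitTheorem in
lemma exists_coeffs
    (ε : Fin (NumberField.Units.rank L) → (𝓞 L)ˣ)
    (hε : ∃ b : @Module.Basis (Fin (NumberField.Units.rank L)) ℤ
        (Additive ((𝓞 L)ˣ ⧸ NumberField.Units.torsion L)) _ _ (AddCommGroup.toIntModule _),
      ∀ i, b i = Additive.ofMul (QuotientGroup.mk (ε i)))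
    (z : InfinitePlace L → ℝ) (hz : ∑ w, z w = 0) :
    ∃ c : Fin (NumberField.Units.rank L) → ℝ,
      z = ∑ i, c i • (fun w : InfinitePlace L =>
        (InfinitePlace.mult w : ℝ) * Real.log (w ((ε i : 𝓞 L) : L))) := by
  obtain ⟨b, hb⟩ := hε
  -- the span of the logEmbedding of the ε i is everything
  have hspan : Submodule.span ℝ
      (Set.range fun i => logEmbedding L (Additive.ofMul ((ε i : (𝓞 L)ˣ)))) = ⊤ := by
    rw [← top_le_iff, ← unitLattice_span_eq_top L]
    rw [Submodule.span_le]
    rintro g hg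
    obtain ⟨u, -, rfl⟩ := hg
    set q : Additive ((𝓞 L)ˣ ⧸ NumberField.Units.torsion L) :=
      Additive.ofMul (QuotientGroup.mk (Additive.toMul u)) with hq
    have hdecomp : q = ∑ i, b.equivFun q i • b i := (b.sum_equivFun q).symm
    have happ : logEmbedding L u = logEmbeddingQuot L q := rfl
    show logEmbedding L u ∈ _
    rw [happ, hdecomp, map_sum]
    apply Submodule.sum_mem
    intro i _
    have key : (logEmbeddingQuot L) (b.equivFun q i • b i)
        = b.equivFun q i • (logEmbeddingQuot L) (b i) := map_zsmul (logEmbeddingQuot L) _ _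
    rw [key, hb i, logEmbeddingQuot_apply]
    rw [← Int.cast_smul_eq_zsmul ℝ]
    exact Submodule.smul_mem _ _ (Submodule.subset_span ⟨i, rfl⟩)
  -- restrict z
  set ρ : (InfinitePlace L → ℝ) →ₗ[ℝ] ({w : InfinitePlace L // w ≠ w₀} → ℝ) :=
    LinearMap.funLeft ℝ ℝ Subtype.val with hρ
  have : ρ z ∈ Submodule.span ℝ
      (Set.range fun i => logEmbedding L (Additive.ofMul ((ε i : (𝓞 L)ˣ)))) := by
    rw [hspan]; trivial
  rw [Submodule.mem_span_range_iff_exists_fun ℝ] at this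
  obtain ⟨c, hc⟩ := this
  refine ⟨c, ?_⟩
  set V : Fin (NumberField.Units.rank L) → InfinitePlace L → ℝ := fun i w =>
    (InfinitePlace.mult w : ℝ) * Real.log (w ((ε i : 𝓞 L) : L)) with hV
  have hcomp : ∀ w (hw : w ≠ w₀), (∑ i, c i • V i) w = z w := by
    intro w hw
    have := congrFun hc ⟨w, hw⟩
    simp [V, logEmbedding_component] at this ⊢
    exact this
  have hVsum : ∀ i, ∑ w, V i w = 0 := fun i => sum_mult_log_unit (ε i)
  have hsum2 : ∑ w, (∑ i, c i • V i) w = 0 := by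
    simp only [Finset.sum_apply, Pi.smul_apply, smul_eq_mul]
    rw [Finset.sum_comm]
    simp_rw [← Finset.mul_sum, hVsum, mul_zero, Finset.sum_const_zero]
  funext w
  by_cases hw : w = w₀
  · subst hw
    have h1 : z w₀ + ∑ w ∈ Finset.univ.erase w₀, z w = 0 := by
      rw [Finset.add_sum_erase _ _ (Finset.mem_univ _)]; exact hz
    have h2 : (∑ i, c i • V i) w₀ + ∑ w ∈ Finset.univ.erase w₀, (∑ i, c i • V i) w = 0 := by
      rw [Finset.add_sum_erase _ _ (Finset.mem_univ _)]; exact hsum2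
    have h3 : ∑ w ∈ Finset.univ.erase w₀, z w
        = ∑ w ∈ Finset.univ.erase w₀, (∑ i, c i • V i) w :=
      Finset.sum_congr rfl fun w hw => (hcomp w (Finset.mem_erase.mp hw).1).symm
    rw [h3] at h1
    linarith
  · exact (hcomp w hw).symm

end NF

/-- Let `(ε_i)` be a fundamental system of units of `Z_L` and
`C = 2·d_L·max_i h(ε_i)` (an empty supremum over `ℝ` is `0`, so `C = 0` if the unit rank is
zero). Then every nonzero principal ideal `𝔞` of `Z_L` admits a generator `a` with
`h(a) ≤ max{C, h°(𝔞)}`, where `h°(𝔞) = (1/d_L)·log N_{L/ℚ}(𝔞)`. -/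


theorem stmt_10 {L : Type*} [Field L] [NumberField L]
    (ε : Fin (NumberField.Units.rank L) → (𝓞 L)ˣ)
    (hε : ∃ b : @Module.Basis (Fin (NumberField.Units.rank L)) ℤ
        (Additive ((𝓞 L)ˣ ⧸ NumberField.Units.torsion L)) _ _ (AddCommGroup.toIntModule _),
      ∀ i, b i = Additive.ofMul (QuotientGroup.mk (ε i)))
    (C : ℝ) (hC : C = 2 * (Module.finrank ℚ L : ℝ) * ⨆ i, elemHeight ((ε i : 𝓞 L) : L))
    (𝔞 : Ideal (𝓞 L)) (h𝔞 : 𝔞 ≠ ⊥) (hprinc : 𝔞.IsPrincipal) :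
    ∃ a : 𝓞 L, 𝔞 = Ideal.span {a} ∧
      elemHeight (a : L) ≤
        max C ((1 / (Module.finrank ℚ L : ℝ)) * Real.log (Ideal.absNorm 𝔞 : ℝ)) := by
  classical
  have hd0 : (0:ℝ) < (Module.finrank ℚ L : ℝ) := by exact_mod_cast Module.finrank_pos
  set d : ℝ := (Module.finrank ℚ L : ℝ) with hd
  obtain ⟨α, hα'⟩ := hprinc.principal
  have hα : 𝔞 = Ideal.span {α} := hα'
  have hα0 : α ≠ 0 := by
    intro h
    apply h𝔞
    rw [hα, h]
    exact Ideal.span_singleton_eq_bot.mpr rfl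
  set M : ℝ := ⨆ i, elemHeight ((ε i : 𝓞 L) : L) with hM
  have hMle : ∀ i, elemHeight ((ε i : 𝓞 L) : L) ≤ M := by
    intro i
    rw [hM]
    exact le_ciSup (f := fun j => elemHeight ((ε j : 𝓞 L) : L))
      (Set.Finite.bddAbove (Set.finite_range _)) i
  have hM0 : 0 ≤ M := by
    rcases isEmpty_or_nonempty (Fin (NumberField.Units.rank L)) with hE | hE
    · rw [hM, Real.iSup_of_isEmpty]
    · exact le_trans (elemHeight_unit_nonneg (ε (Classical.arbitrary _))) (hMle _)
  set t : ℝ := 2 * d * M with htdef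
  have ht0 : 0 ≤ t := by positivity
  set n : ℝ := Real.log (Ideal.absNorm 𝔞 : ℝ) with hn
  have habs1 : (1:ℝ) ≤ (Ideal.absNorm 𝔞 : ℝ) := by
    have : Ideal.absNorm 𝔞 ≠ 0 := by
      rw [ne_eq, Ideal.absNorm_eq_zero_iff]
      exact h𝔞
    exact_mod_cast Nat.one_le_iff_ne_zero.mpr this
  have hn0 : 0 ≤ n := by rw [hn]; exact Real.log_nonneg habs1
  have hsummult : ∑ w : InfinitePlace L, (InfinitePlace.mult w : ℝ) = d := by
    rw [hd]
    exact_mod_cast congrArg (Nat.cast : ℕ → ℝ) (NumberField.InfinitePlace.sum_mult_eq (K := L))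
  have hsumα : ∑ w : InfinitePlace L, (InfinitePlace.mult w : ℝ) * Real.log (w (α : L)) = n := by
    rw [sum_mult_log' α hα0, hn, hα, Ideal.absNorm_span_singleton]
    congr 1
    simp [Nat.cast_natAbs, Int.cast_abs]
  set z : InfinitePlace L → ℝ := fun w =>
    (InfinitePlace.mult w : ℝ) * Real.log (w (α : L))
      - (InfinitePlace.mult w : ℝ) * (n / d) with hzdef
  have hzsum : ∑ w, z w = 0 := by
    simp only [hzdef]
    rw [Finset.sum_sub_distrib, hsumα, ← Finset.sum_mul, hsummult]
    field_simp
    ring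
  obtain ⟨c, hc⟩ := exists_coeffs ε hε z hzsum
  set V : Fin (NumberField.Units.rank L) → InfinitePlace L → ℝ := fun i w =>
    (InfinitePlace.mult w : ℝ) * Real.log (w ((ε i : 𝓞 L) : L)) with hVdef
  have hV1 : ∀ i, ∑ w, |V i w| ≤ t := by
    intro i
    have h1 := sum_abs_mult_log_unit (ε i)
    rw [htdef, hd]
    calc ∑ w, |V i w| = 2 * (Module.finrank ℚ L : ℝ) * elemHeight ((ε i : 𝓞 L) : L) := h1
      _ ≤ 2 * (Module.finrank ℚ L : ℝ) * M := by nlinarith [hMle i]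
  obtain ⟨u, hu⟩ := bf V t ht0 hV1 c
  set U : (𝓞 L)ˣ := ∏ i, (ε i) ^ (-(u i)) with hUdef
  set a : 𝓞 L := α * (U : 𝓞 L) with hadef
  have ha0 : a ≠ 0 := mul_ne_zero hα0 U.ne_zero
  have haspan : 𝔞 = Ideal.span {a} := by
    rw [hα, hadef]
    exact (Ideal.span_singleton_mul_right_unit U.isUnit α).symm
  refine ⟨a, haspan, ?_⟩
  set y : InfinitePlace L → ℝ := fun w => Real.log (w (a : L)) with hydef
  have hwα : ∀ w : InfinitePlace L, w ((α : L)) ≠ 0 :=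
    fun w => (map_ne_zero w).mpr (by exact_mod_cast hα0)
  have hwU : ∀ w : InfinitePlace L, w (((U : 𝓞 L)) : L) ≠ 0 :=
    fun w => (map_ne_zero w).mpr (by exact_mod_cast U.ne_zero)
  have hylog : ∀ w, y w = Real.log (w (α : L))
      + ∑ i, ((-(u i) : ℤ) : ℝ) * Real.log (w ((ε i : 𝓞 L) : L)) := by
    intro w
    have hcoe : ((a : 𝓞 L) : L) = (α : L) * ((U : 𝓞 L) : L) := by
      rw [hadef]; push_cast; ring
    simp only [hydef]
    rw [hcoe, map_mul, Real.log_mul (hwα w) (hwU w)]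
    congr 1
    rw [hUdef]
    exact log_w_prod_zpow w ε (fun i => -(u i))
  have hzw : ∀ w, z w = ∑ i, c i * V i w := by
    intro w
    have h1 := congrFun hc w
    simpa [Finset.sum_apply, hVdef] using h1
  have hkey : ∀ w, (InfinitePlace.mult w : ℝ) * y w
      = (InfinitePlace.mult w : ℝ) * (n / d) + ∑ i, (c i - (u i : ℝ)) * V i w := by
    intro w
    rw [hylog w, mul_add]
    have h3 : (InfinitePlace.mult w : ℝ) * ∑ i, ((-(u i) : ℤ) : ℝ)
        * Real.log (w ((ε i : 𝓞 L) : L)) = - ∑ i, (u i : ℝ) * V i w := by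
      rw [Finset.mul_sum, ← Finset.sum_neg_distrib]
      apply Finset.sum_congr rfl
      intro i _
      simp only [hVdef]
      push_cast
      ring
    have h2 : (InfinitePlace.mult w : ℝ) * Real.log (w (α : L))
        = (InfinitePlace.mult w : ℝ) * (n / d) + z w := by
      simp only [hzdef]; ring
    rw [h3, h2, hzw w]
    have h4 : ∑ i, (c i - (u i : ℝ)) * V i w
        = (∑ i, c i * V i w) - ∑ i, (u i : ℝ) * V i w := by
      rw [← Finset.sum_sub_distrib]
      exact Finset.sum_congr rfl (fun i _ => by ring)
    rw [h4]
    ring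
  have herr : ∀ w, |∑ i, (c i - (u i : ℝ)) * V i w| ≤ t := hu
  have hysum : ∑ w : InfinitePlace L, (InfinitePlace.mult w : ℝ) * y w = n := by
    simp only [hydef]
    rw [sum_mult_log' a ha0, hn, haspan, Ideal.absNorm_span_singleton]
    congr 1
    simp [Nat.cast_natAbs, Int.cast_abs]
  have hmax : ∀ w : InfinitePlace L, (InfinitePlace.mult w : ℝ) * max 0 (y w)
      ≤ (InfinitePlace.mult w : ℝ) * y w
        + (InfinitePlace.mult w : ℝ) * max 0 (t - n / d) := by
    intro w
    have hm1 : (1:ℝ) ≤ (InfinitePlace.mult w : ℝ) := NumberField.InfinitePlace.one_le_mult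
    have hkw := hkey w
    have herrw := abs_le.mp (herr w)
    have hnd0 : 0 ≤ n / d := by positivity
    have hlow : (InfinitePlace.mult w : ℝ) * (n / d) - t ≤ (InfinitePlace.mult w : ℝ) * y w := by
      linarith [herrw.1]
    rcases le_or_gt (y w) 0 with hy | hy
    · rw [max_eq_left hy]
      have h2 : t - (InfinitePlace.mult w : ℝ) * (n / d)
          ≤ (InfinitePlace.mult w : ℝ) * max 0 (t - n / d) := by
        rcases le_or_gt (t - n / d) 0 with hcs | hcs
        · rw [max_eq_left hcs]
          nlinarith
        · rw [max_eq_right (le_of_lt hcs)]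
          nlinarith
      linarith
    · rw [max_eq_right (le_of_lt hy)]
      have h7 : 0 ≤ (InfinitePlace.mult w : ℝ) * max 0 (t - n / d) :=
        mul_nonneg (by positivity) (le_max_left _ _)
      linarith
  have hfinal : ∑ w : InfinitePlace L, (InfinitePlace.mult w : ℝ) * max 0 (y w)
      ≤ n + d * max 0 (t - n / d) := by
    calc ∑ w : InfinitePlace L, (InfinitePlace.mult w : ℝ) * max 0 (y w)
        ≤ ∑ w : InfinitePlace L, ((InfinitePlace.mult w : ℝ) * y w
            + (InfinitePlace.mult w : ℝ) * max 0 (t - n / d)) :=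
          Finset.sum_le_sum (fun w _ => hmax w)
      _ = n + d * max 0 (t - n / d) := by
          rw [Finset.sum_add_distrib, hysum, ← Finset.sum_mul, hsummult]
  have hheq : elemHeight (a : L) = (1 / d) *
      ∑ w : InfinitePlace L, (InfinitePlace.mult w : ℝ) * max 0 (y w) := by
    rw [elemHeight_int a ha0]
  have hCt : C = t := by rw [hC, htdef, hd, hM]
  rw [hheq]
  rcases le_or_gt (t - n / d) 0 with hcase | hcase
  · rw [max_eq_left hcase, mul_zero, add_zero] at hfinal
    have h5 : (1 / d) * (∑ w : InfinitePlace L, (InfinitePlace.mult w : ℝ) * max 0 (y w))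
        ≤ (1 / d) * n := mul_le_mul_of_nonneg_left hfinal (by positivity)
    refine le_trans h5 ?_
    exact le_max_right _ _
  · rw [max_eq_right (le_of_lt hcase)] at hfinal
    have h5 : (1 / d) * (∑ w : InfinitePlace L, (InfinitePlace.mult w : ℝ) * max 0 (y w))
        ≤ (1 / d) * (n + d * (t - n / d)) := mul_le_mul_of_nonneg_left hfinal (by positivity)
    have h6 : (1 / d) * (n + d * (t - n / d)) = t := by
      field_simp
      ring
    refine le_trans h5 ?_
    rw [h6, ← hCt]
    exact le_max_left _ _
end
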